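/- arXiv:2602.22504 — 4 statements merged into one kernel-verified Lean document; each statement's English description precedes it below -/
import Mathlib

section
/- Let d_1 = 2n_1+1 and d_2 = 2n_2+1 be odd numbers, d = d_1+d_2−1, and let λ_1, λ_2 be special orthogonal partitions of d_1 and d_2. Then W = W(λ_1,λ_2) (type B data) is an orthogonal partition of d and D_o(W) = D_o(λ_1) + D_o(λ_2) + d(d−1)/2 − d_1(d_1−1)/2 − d_2(d_2−1)/2. -/
/-- `f` is a partition of `d`: weakly decreasing, finitely many nonzero terms, total sum `d`.
    Indexing is 0-based: `f j` is the `(j+1)`-st part. -/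
def IsPartitionOf (f : ℕ → ℕ) (d : ℕ) : Prop :=
  Antitone f ∧ ∃ N, (∀ j, N ≤ j → f j = 0) ∧ ∑ j ∈ Finset.range N, f j = d

/-- Transpose of a partition (0-based): `ptrans f k` = #{j : f j ≥ k+1}, i.e. `(f^t)_{k+1}`. -/
noncomputable def ptrans (f : ℕ → ℕ) : ℕ → ℕ := fun k => Nat.card {j : ℕ // k + 1 ≤ f j}

/-- Multiplicity of the part `k` in `f` (meaningful for `k > 0`). -/
noncomputable def pmult (f : ℕ → ℕ) (k : ℕ) : ℕ := Nat.card {j : ℕ // f j = k}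

/-- Orthogonal: every even positive part occurs with even multiplicity. -/
def IsOrthogonal (f : ℕ → ℕ) : Prop := ∀ k, 0 < k → Even k → Even (pmult f k)

/-- Symplectic: every odd positive part occurs with even multiplicity. -/
def IsSymplectic (f : ℕ → ℕ) : Prop := ∀ k, 0 < k → Odd k → Even (pmult f k)

/-- Dominance order for ℕ-valued sequences. -/
def NDomLE (f g : ℕ → ℕ) : Prop :=
  ∀ N, ∑ j ∈ Finset.range N, f j ≤ ∑ j ∈ Finset.range N, g j

/-- Dominance order for ℤ-valued sequences. -/
def DomLE (f g : ℕ → ℤ) : Prop :=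
  ∀ N, ∑ j ∈ Finset.range N, f j ≤ ∑ j ∈ Finset.range N, g j

/-- `ν` is the `P`-collapse of `μ` (both of total size `m`): `ν` is a partition of `m`
    satisfying `P`, `ν ≤ μ`, and every partition `σ` of `m` satisfying `P` with `σ ≤ μ`
    satisfies `σ ≤ ν`. -/
def IsCollapse (P : (ℕ → ℕ) → Prop) (m : ℕ) (μ ν : ℕ → ℕ) : Prop :=
  IsPartitionOf ν m ∧ P ν ∧ NDomLE ν μ ∧
    ∀ σ, IsPartitionOf σ m → P σ → NDomLE σ μ → NDomLE σ ν

/-- B-collapse (largest orthogonal partition below `μ`, `m` odd). -/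
def IsBCollapse : ℕ → (ℕ → ℕ) → (ℕ → ℕ) → Prop := IsCollapse IsOrthogonal
/-- C-collapse (largest symplectic partition below `μ`, `m` even). -/
def IsCCollapse : ℕ → (ℕ → ℕ) → (ℕ → ℕ) → Prop := IsCollapse IsSymplectic
/-- D-collapse (largest orthogonal partition below `μ`, `m` even). -/
def IsDCollapse : ℕ → (ℕ → ℕ) → (ℕ → ℕ) → Prop := IsCollapse IsOrthogonal

/-- `μ^−` : decrease the smallest nonzero part by 1. -/
def minusOne (f : ℕ → ℕ) : ℕ → ℕ :=
  fun j => if 0 < f j ∧ f (j+1) = 0 then f j - 1 else f j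

/-- `μ^+` : increase the largest part by 1. -/
def plusOne (f : ℕ → ℕ) : ℕ → ℕ := fun j => if j = 0 then f 0 + 1 else f j

/-- `u = f ∪ g` : `u` is weakly decreasing, finitely supported, and every positive
    part occurs in `u` with multiplicity the sum of its multiplicities in `f` and `g`. -/
def IsUnionOf (u f g : ℕ → ℕ) : Prop :=
  Antitone u ∧ (∃ N, ∀ j, N ≤ j → u j = 0) ∧
    ∀ k, 0 < k → pmult u k = pmult f k + pmult g k

/-- The sequence ξ attached to `(f, g, ε₁, ε₂, d)`.  Index `j` here corresponds to the
    1-based index `j+1` of the paper. -/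
def xiSeq (f g : ℕ → ℕ) (e1 e2 d : ℕ) : ℕ → ℤ := fun j =>
  if (j + 1) % 2 = (d + 1) % 2 ∧ f j % 2 = e1 ∧ g j % 2 = e2 ∧
      (j = 0 ∨ f j + g j < f (j - 1) + g (j - 1)) then 1
  else if (j + 1) % 2 = d % 2 ∧ f j % 2 = e1 ∧ g j % 2 = e2 ∧
      f (j + 1) + g (j + 1) < f j + g j then -1
  else 0

/-- The Waldspurger sequence `W(f,g) = f + g + ξ` (ℤ-valued a priori). -/
def wald (f g : ℕ → ℕ) (e1 e2 d : ℕ) : ℕ → ℤ :=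
  fun j => (f j : ℤ) + (g j : ℤ) + xiSeq f g e1 e2 d j

/-- Sum of squares of the transpose parts: `Σ_k ((λᵗ)_k)²` (k ranges over 1,…,λ₁). -/
noncomputable def sumSqTrans (f : ℕ → ℕ) : ℕ := ∑ k ∈ Finset.range (f 0), (ptrans f k)^2

/-- Number of odd parts `#{j : λ_j odd}`. -/
noncomputable def oddCount (f : ℕ → ℕ) : ℕ := Nat.card {j : ℕ // Odd (f j)}

/-- `D_o(λ) = N(N−1)/2 − (Σ_k ((λᵗ)_k)² − #{odd parts})/2`, the dimension of the
nilpotent orbit of Jordan type `λ` in `so_N`. -/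
noncomputable def Dorth (f : ℕ → ℕ) (N : ℕ) : ℚ :=
  (N : ℚ) * ((N : ℚ) - 1) / 2 - ((sumSqTrans f : ℚ) - (oddCount f : ℚ)) / 2

/-- `D_sp(λ) = n(2n+1) − (Σ_k ((λᵗ)_k)² + #{odd parts})/2`, the dimension of the
nilpotent orbit of Jordan type `λ` in `sp_{2n}`. -/
noncomputable def Dsymp (f : ℕ → ℕ) (n : ℕ) : ℚ :=
  (n : ℚ) * (2 * (n : ℚ) + 1) - ((sumSqTrans f : ℚ) + (oddCount f : ℚ)) / 2

noncomputable def cnt (f : ℕ → ℕ) (x : ℕ) : ℕ := Nat.card {j : ℕ // x ≤ f j}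

lemma ptrans_eq_cnt (f : ℕ → ℕ) (k : ℕ) : ptrans f k = cnt f (k+1) := rfl

lemma dc_mem_iff {F : Finset ℕ} (hdc : ∀ j j', j' ≤ j → j ∈ F → j' ∈ F) (j : ℕ) :
    j ∈ F ↔ j < F.card := by
  constructor
  · intro hj
    have h1 : Finset.range (j+1) ⊆ F := fun x hx =>
      hdc j x (Nat.lt_succ_iff.mp (Finset.mem_range.mp hx)) hj
    have := Finset.card_le_card h1
    simpa using this
  · intro hj
    by_contra hn
    have hss : F ⊆ Finset.range j := by
      intro x hx
      rw [Finset.mem_range]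
      by_contra hxn
      exact hn (hdc x j (le_of_not_gt hxn) hx)
    have := Finset.card_le_card hss
    simp at this; omega

lemma natCard_eq_filter (P : ℕ → Prop) [DecidablePred P] {N : ℕ} (h : ∀ j, P j → j < N) :
    Nat.card {j // P j} = ((Finset.range N).filter P).card := by
  have hs : {j | P j} = ↑((Finset.range N).filter P) := by
    ext j
    simp only [Finset.coe_filter, Finset.mem_range, Set.mem_setOf_eq]
    exact ⟨fun hp => ⟨h j hp, hp⟩, fun hp => hp.2⟩
  rw [show Nat.card {j // P j} = Nat.card {j | P j} from rfl, Nat.card_coe_set_eq, hs,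
    Set.ncard_coe_finset]

lemma lt_cnt_iff {h : ℕ → ℕ} (hh : Antitone h) {N : ℕ} (hs : ∀ j, N ≤ j → h j = 0)
    {x : ℕ} (hx : 1 ≤ x) (j : ℕ) : j < cnt h x ↔ x ≤ h j := by
  have hb : ∀ j, x ≤ h j → j < N := by
    intro j hj
    by_contra hn
    have := hs j (le_of_not_gt hn); omega
  have hcard : cnt h x = ((Finset.range N).filter (fun j => x ≤ h j)).card :=
    natCard_eq_filter _ hb
  have hdc : ∀ a a', a' ≤ a → a ∈ (Finset.range N).filter (fun j => x ≤ h j) →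
      a' ∈ (Finset.range N).filter (fun j => x ≤ h j) := by
    intro a a' haa ha
    simp only [Finset.mem_filter, Finset.mem_range] at ha ⊢
    have : x ≤ h a' := le_trans ha.2 (hh haa)
    exact ⟨hb a' this, this⟩
  rw [hcard, ← dc_mem_iff hdc]
  simp only [Finset.mem_filter, Finset.mem_range]
  exact ⟨fun hp => hp.2, fun hp => ⟨hb j hp, hp⟩⟩

lemma cnt_antitone_gen {h : ℕ → ℕ} (hh : Antitone h) {N : ℕ} (hs : ∀ j, N ≤ j → h j = 0)
    {x y : ℕ} (hx : 1 ≤ x) (hxy : x ≤ y) : cnt h y ≤ cnt h x := by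
  by_contra hn
  push_neg at hn
  have h1 : cnt h x < cnt h y := hn
  have h2 : y ≤ h (cnt h x) := (lt_cnt_iff hh hs (le_trans hx hxy) _).mp h1
  have h3 : ¬ (cnt h x < cnt h x) := lt_irrefl _
  rw [lt_cnt_iff hh hs hx] at h3
  omega

lemma pmult_eq_cnt {h : ℕ → ℕ} (hh : Antitone h) {N : ℕ} (hs : ∀ j, N ≤ j → h j = 0)
    {x : ℕ} (hx : 1 ≤ x) : pmult h x = cnt h x - cnt h (x+1) := by
  have key : ∀ j, h j = x ↔ (cnt h (x+1) ≤ j ∧ j < cnt h x) := by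
    intro j
    have i1 := lt_cnt_iff hh hs hx j
    have i2 := lt_cnt_iff hh hs (by omega : 1 ≤ x+1) j
    omega
  have hset : {j | h j = x} = ↑(Finset.Ico (cnt h (x+1)) (cnt h x)) := by
    ext j
    simp only [Set.mem_setOf_eq, Finset.coe_Ico, Set.mem_Ico]
    exact key j
  rw [show pmult h x = Nat.card {j | h j = x} from rfl, Nat.card_coe_set_eq, hset,
    Set.ncard_coe_finset, Nat.card_Ico]

lemma ptrans_antitone {h : ℕ → ℕ} (hh : Antitone h) {N : ℕ} (hs : ∀ j, N ≤ j → h j = 0) :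
    Antitone (ptrans h) := by
  intro a b hab
  rw [ptrans_eq_cnt, ptrans_eq_cnt]
  exact cnt_antitone_gen hh hs (by omega) (by omega)

lemma ptrans_support {h : ℕ → ℕ} (hh : Antitone h) (k : ℕ) (hk : h 0 ≤ k) :
    ptrans h k = 0 := by
  have : IsEmpty {j : ℕ // k + 1 ≤ h j} := by
    constructor
    rintro ⟨j, hj⟩
    have := hh (Nat.zero_le j)
    omega
  rw [ptrans]
  exact Nat.card_of_isEmpty

lemma cnt_ptrans {h : ℕ → ℕ} (hh : Antitone h) {N : ℕ} (hs : ∀ j, N ≤ j → h j = 0)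
    {v : ℕ} (hv : 1 ≤ v) : cnt (ptrans h) v = h (v-1) := by
  have key : ∀ k, v ≤ ptrans h k ↔ k < h (v-1) := by
    intro k
    rw [ptrans_eq_cnt]
    have i1 := lt_cnt_iff hh hs (by omega : 1 ≤ k+1) (v-1)
    omega
  have hset : {k | v ≤ ptrans h k} = ↑(Finset.range (h (v-1))) := by
    ext k
    simp only [Set.mem_setOf_eq, Finset.coe_range, Set.mem_Iio]
    exact key k
  rw [show cnt (ptrans h) v = Nat.card {k | v ≤ ptrans h k} from rfl, Nat.card_coe_set_eq,
    hset, Set.ncard_coe_finset, Finset.card_range]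

lemma pmult_ptrans {h : ℕ → ℕ} (hh : Antitone h) {N : ℕ} (hs : ∀ j, N ≤ j → h j = 0)
    {v : ℕ} (hv : 1 ≤ v) : pmult (ptrans h) v = h (v-1) - h v := by
  have hpa := ptrans_antitone hh hs
  have hps : ∀ k, h 0 ≤ k → ptrans h k = 0 := fun k hk => ptrans_support hh k hk
  rw [pmult_eq_cnt hpa hps hv, cnt_ptrans hh hs hv, cnt_ptrans hh hs (by omega : 1 ≤ v+1)]
  have : v + 1 - 1 = v := by omega
  rw [this]

lemma sum_pair {M : Type*} [AddCommMonoid M] (F : ℕ → M) (n : ℕ) :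
    ∑ j ∈ Finset.range (2*n), F j = ∑ i ∈ Finset.range n, (F (2*i) + F (2*i+1)) := by
  induction n with
  | zero => simp
  | succ m ih =>
    have : 2*(m+1) = (2*m) + 1 + 1 := by ring
    rw [this, Finset.sum_range_succ, Finset.sum_range_succ, ih, Finset.sum_range_succ]
    have h2 : 2*m+1 = 2*m+1 := rfl
    abel

lemma sum_odd_start (h : ℕ → ℕ) (n : ℕ) :
    ∑ j ∈ Finset.range (2*n+1), h j = h 0 + ∑ i ∈ Finset.range n, (h (2*i+1) + h (2*i+2)) := by
  induction n with
  | zero => simp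
  | succ m ih =>
    have : 2*(m+1)+1 = (2*m+1) + 1 + 1 := by ring
    rw [this, Finset.sum_range_succ, Finset.sum_range_succ, ih, Finset.sum_range_succ]
    have e1 : 2*m+1+1 = 2*m+2 := rfl
    rw [e1]
    ring

lemma sum_ind_lt (c m : ℕ) : ∑ k ∈ Finset.range c, (if k < m then (1:ℕ) else 0) = min m c := by
  induction c with
  | zero => simp
  | succ cc ih =>
    rw [Finset.sum_range_succ, ih]
    by_cases h : cc < m <;> simp [h] <;> omega

lemma sum_min_antitone {h : ℕ → ℕ} (hh : Antitone h) (N : ℕ) :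
    ∑ j ∈ Finset.range N, ∑ j' ∈ Finset.range N, min (h j) (h j')
      = ∑ j ∈ Finset.range N, (2*j+1) * h j := by
  induction N with
  | zero => simp
  | succ n ih =>
    rw [Finset.sum_range_succ (fun j => ∑ j' ∈ Finset.range (n+1), min (h j) (h j'))]
    have inner : ∀ j, j < n → ∑ j' ∈ Finset.range (n+1), min (h j) (h j')
        = (∑ j' ∈ Finset.range n, min (h j) (h j')) + h n := by
      intro j hj
      rw [Finset.sum_range_succ]
      congr 1
      exact min_eq_right (hh (by omega))
    rw [Finset.sum_congr rfl (fun j hj => inner j (Finset.mem_range.mp hj)),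
      Finset.sum_add_distrib, Finset.sum_const, Finset.card_range, ih]
    have last : ∑ j' ∈ Finset.range (n+1), min (h n) (h j') = n * h n + h n := by
      rw [Finset.sum_range_succ]
      have : ∀ j' ∈ Finset.range n, min (h n) (h j') = h n := by
        intro j' hj'
        exact min_eq_left (hh (by simp at hj'; omega))
      rw [Finset.sum_congr rfl this, Finset.sum_const, Finset.card_range]
      simp
    rw [last, Finset.sum_range_succ]
    ring

lemma sumSqTrans_eq {h : ℕ → ℕ} (hh : Antitone h) {N : ℕ} (hs : ∀ j, N ≤ j → h j = 0) :
    sumSqTrans h = ∑ j ∈ Finset.range N, (2*j+1) * h j := by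
  have hb : ∀ k, ∀ j, k + 1 ≤ h j → j < N := by
    intro k j hj
    by_contra hn
    have := hs j (le_of_not_gt hn); omega
  have h1 : ∀ k, ptrans h k = ∑ j ∈ Finset.range N, (if k + 1 ≤ h j then 1 else 0) := by
    intro k
    rw [ptrans, natCard_eq_filter _ (hb k)]
    rw [Finset.card_filter]
  rw [sumSqTrans]
  have h2 : ∀ k, (ptrans h k)^2 = ∑ j ∈ Finset.range N, ∑ j' ∈ Finset.range N,
      (if k + 1 ≤ h j then 1 else 0) * (if k + 1 ≤ h j' then 1 else 0) := by
    intro k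
    rw [h1, pow_two, Finset.sum_mul_sum]
  rw [Finset.sum_congr rfl (fun k _ => h2 k), Finset.sum_comm]
  have h3 : ∀ j, ∑ k ∈ Finset.range (h 0), ∑ j' ∈ Finset.range N,
      (if k + 1 ≤ h j then 1 else 0) * (if k + 1 ≤ h j' then 1 else 0)
      = ∑ j' ∈ Finset.range N, min (h j) (h j') := by
    intro j
    rw [Finset.sum_comm]
    apply Finset.sum_congr rfl
    intro j' _
    have h4 : ∀ k, (if k + 1 ≤ h j then (1:ℕ) else 0) * (if k + 1 ≤ h j' then 1 else 0)
        = if k < min (h j) (h j') then 1 else 0 := by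
      intro k
      simp only [lt_min_iff]
      split_ifs <;> omega
    rw [Finset.sum_congr rfl (fun k _ => h4 k), sum_ind_lt]
    have : min (h j) (h j') ≤ h 0 := le_trans (min_le_left _ _) (hh (Nat.zero_le j))
    omega
  rw [Finset.sum_congr rfl (fun j _ => h3 j), sum_min_antitone hh]

lemma oddCount_eq {h : ℕ → ℕ} {N : ℕ} (hs : ∀ j, N ≤ j → h j = 0) :
    oddCount h = ∑ j ∈ Finset.range N, (if h j % 2 = 1 then 1 else 0) := by
  have hb : ∀ j, Odd (h j) → j < N := by
    intro j hj
    by_contra hn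
    rw [hs j (le_of_not_gt hn)] at hj
    simp at hj
  rw [oddCount, natCard_eq_filter _ hb, Finset.card_filter]
  apply Finset.sum_congr rfl
  intro j _
  simp only [Nat.odd_iff]

section structural
variable {h : ℕ → ℕ} {N : ℕ}

lemma block_start_odd (hh : Antitone h) (hs : ∀ j, N ≤ j → h j = 0)
    (horth : IsOrthogonal h) (hP1 : h 0 % 2 = 1)
    (hP2 : ∀ j, j % 2 = 1 → h j % 2 = h (j+1) % 2) :
    ∀ s, h s % 2 = 0 → (s = 0 ∨ h s < h (s-1)) → s % 2 = 1 := by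
  intro s
  induction s using Nat.strong_induction_on with
  | _ s IH =>
    intro hev hdrop
    rcases hdrop with rfl | hdrop
    · omega
    by_contra hcon
    have hs1 : 1 ≤ s := by
      rcases Nat.eq_zero_or_pos s with rfl | hp
      · simp at hdrop
      · exact hp
    have hsodd : (s-1) % 2 = 1 := by omega
    have hpar : h (s-1) % 2 = h s % 2 := by
      have := hP2 (s-1) hsodd
      have e : s - 1 + 1 = s := by omega
      rwa [e] at this
    set x := h (s-1) with hx
    have hxpos : 1 ≤ x := by omega
    have hxev : x % 2 = 0 := by omega
    set c := cnt h (x+1) with hc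
    set c' := cnt h x with hc'
    have i1 : ∀ j, j < c' ↔ x ≤ h j := fun j => lt_cnt_iff hh hs hxpos j
    have i2 : ∀ j, j < c ↔ x+1 ≤ h j := fun j => lt_cnt_iff hh hs (by omega) j
    have hc's : c' = s := by
      have a1 : s - 1 < c' := (i1 _).mpr (le_refl x)
      have a2 : ¬ (s < c') := by rw [i1]; omega
      omega
    have hcle : c ≤ s - 1 := by
      have : ¬ (s - 1 < c) := by rw [i2]; omega
      omega
    have hhc : h c = x := by
      have a1 : x ≤ h c := (i1 c).mp (by omega)
      have a2 : ¬ (x + 1 ≤ h c) := by rw [← i2]; omega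
      omega
    have hcodd : c % 2 = 1 := by
      apply IH c (by omega) (by omega)
      rcases Nat.eq_zero_or_pos c with hc0 | hcp
      · left; omega
      · right
        have : c - 1 < c := by omega
        rw [i2] at this
        omega
    have hmult : pmult h x = c' - c := pmult_eq_cnt hh hs hxpos
    have heven : Even (pmult h x) := horth x (by omega) (Nat.even_iff.mpr hxev)
    rw [hmult, Nat.even_iff] at heven
    omega

lemma block_end_even (hh : Antitone h) (hs : ∀ j, N ≤ j → h j = 0)
    (horth : IsOrthogonal h) (hP1 : h 0 % 2 = 1)
    (hP2 : ∀ j, j % 2 = 1 → h j % 2 = h (j+1) % 2) :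
    ∀ e, h e % 2 = 0 → h (e+1) < h e → e % 2 = 0 := by
  intro e hev hdrop
  set x := h e with hx
  have hxpos : 1 ≤ x := by omega
  set c := cnt h (x+1) with hc
  set c' := cnt h x with hc'
  have i1 : ∀ j, j < c' ↔ x ≤ h j := fun j => lt_cnt_iff hh hs hxpos j
  have i2 : ∀ j, j < c ↔ x+1 ≤ h j := fun j => lt_cnt_iff hh hs (by omega) j
  have hc's : c' = e + 1 := by
    have a1 : e < c' := (i1 _).mpr (le_refl x)
    have a2 : ¬ (e + 1 < c') := by rw [i1]; omega
    omega
  have hcle : c ≤ e := by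
    have : ¬ (e < c) := by rw [i2]; omega
    omega
  have hhc : h c = x := by
    have a1 : x ≤ h c := (i1 c).mp (by omega)
    have a2 : ¬ (x + 1 ≤ h c) := by rw [← i2]; omega
    omega
  have hcodd : c % 2 = 1 := by
    apply block_start_odd hh hs horth hP1 hP2 c (by omega)
    rcases Nat.eq_zero_or_pos c with hc0 | hcp
    · left; omega
    · right
      have : c - 1 < c := by omega
      rw [i2] at this
      omega
  have hmult : pmult h x = c' - c := pmult_eq_cnt hh hs hxpos
  have heven : Even (pmult h x) := horth x (by omega) (Nat.even_iff.mpr (by omega))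
  rw [hmult, Nat.even_iff] at heven
  omega

end structural

section xi
variable {f g : ℕ → ℕ} {d : ℕ} (hd : d % 2 = 1)

lemma xi_mem (j : ℕ) : xiSeq f g 1 1 d j = -1 ∨ xiSeq f g 1 1 d j = 0 ∨ xiSeq f g 1 1 d j = 1 := by
  unfold xiSeq; split_ifs <;> simp

include hd

lemma xi_pos_elim {j : ℕ} (hx : xiSeq f g 1 1 d j = 1) :
    j % 2 = 1 ∧ f j % 2 = 1 ∧ g j % 2 = 1 ∧ f j + g j < f (j-1) + g (j-1) ∧ j ≠ 0 := by
  unfold xiSeq at hx; split_ifs at hx with h1 h2 <;> omega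

lemma xi_neg_elim {j : ℕ} (hx : xiSeq f g 1 1 d j = -1) :
    j % 2 = 0 ∧ f j % 2 = 1 ∧ g j % 2 = 1 ∧ f (j+1) + g (j+1) < f j + g j := by
  unfold xiSeq at hx; split_ifs at hx with h1 h2 <;> omega

lemma xi_pos_of {j : ℕ} (hj : j % 2 = 1) (hf : f j % 2 = 1) (hg : g j % 2 = 1)
    (hdrop : f j + g j < f (j-1) + g (j-1)) : xiSeq f g 1 1 d j = 1 := by
  unfold xiSeq; split_ifs with h1 h2 <;> omega

lemma xi_neg_of {j : ℕ} (hj : j % 2 = 0) (hf : f j % 2 = 1) (hg : g j % 2 = 1)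
    (hdrop : f (j+1) + g (j+1) < f j + g j) : xiSeq f g 1 1 d j = -1 := by
  unfold xiSeq; split_ifs with h1 h2 <;> omega

lemma xi_zero_even_nodrop {j : ℕ} (hj : j % 2 = 0)
    (hnd : ¬ (f (j+1) + g (j+1) < f j + g j)) : xiSeq f g 1 1 d j = 0 := by
  unfold xiSeq; split_ifs with h1 h2 <;> omega

lemma xi_zero_odd_nodrop {j : ℕ} (hj : j % 2 = 1)
    (hnd : ¬ (f j + g j < f (j-1) + g (j-1))) : xiSeq f g 1 1 d j = 0 := by
  unfold xiSeq; split_ifs with h1 h2 <;> omega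

lemma xi_zero_notodd {j : ℕ} (hf : ¬ (f j % 2 = 1 ∧ g j % 2 = 1)) :
    xiSeq f g 1 1 d j = 0 := by
  unfold xiSeq; split_ifs with h1 h2 <;> omega

end xi

lemma special_pairing {h : ℕ → ℕ} {N : ℕ} (hh : Antitone h) (hs : ∀ j, N ≤ j → h j = 0)
    (hsp : IsOrthogonal (ptrans h)) :
    ∀ j, j % 2 = 1 → h j % 2 = h (j+1) % 2 := by
  intro j hj
  have hv : Even (pmult (ptrans h) (j+1)) := hsp (j+1) (by omega) (by rw [Nat.even_iff]; omega)
  rw [pmult_ptrans hh hs (by omega : 1 ≤ j+1)] at hv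
  have e : j + 1 - 1 = j := by omega
  rw [e] at hv
  have hle : h (j+1) ≤ h j := hh (by omega)
  rw [Nat.even_iff] at hv
  omega

lemma first_odd {h : ℕ → ℕ} {N n : ℕ} (hs : ∀ j, N ≤ j → h j = 0)
    (hsum : ∑ j ∈ Finset.range N, h j = 2*n+1)
    (hP2 : ∀ j, j % 2 = 1 → h j % 2 = h (j+1) % 2) : h 0 % 2 = 1 := by
  have hext : ∑ j ∈ Finset.range (2*N+1), h j = 2*n+1 := by
    rw [← hsum]
    symm
    apply Finset.sum_subset (Finset.range_subset_range.mpr (by omega))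
    intro x _ hx
    exact hs x (by simp at hx; omega)
  rw [sum_odd_start] at hext
  have hpair : Even (∑ i ∈ Finset.range N, (h (2*i+1) + h (2*i+2))) := by
    apply Finset.even_sum
    intro i _
    have h2 := hP2 (2*i+1) (by omega)
    have e : 2*i+1+1 = 2*i+2 := by ring
    rw [e] at h2
    rw [Nat.even_iff]
    omega
  rw [Nat.even_iff] at hpair
  omega

def rz (f g : ℕ → ℕ) : ℕ → ℤ := fun j => if f j % 2 = 1 ∧ g j % 2 = 1 then 1 else 0

def xne (f g : ℕ → ℕ) (d : ℕ) : ℕ → ℤ := fun j => if xiSeq f g 1 1 d j = 0 then 0 else 1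


lemma tele_gen (R : ℕ → ℤ) (hpair : ∀ i : ℕ, R (2*i+1) = R (2*i+2)) :
    ∀ n : ℕ, ∑ i ∈ Finset.range n, ((4*(i:ℤ)+2)*(R (2*i+1) - R (2*i)))
      = 4*(n:ℤ)*R (2*n) - 2*∑ j ∈ Finset.range (2*n), R j := by
  intro n
  induction n with
  | zero => simp
  | succ m ih =>
    rw [Finset.sum_range_succ, ih]
    have e1 : ∑ j ∈ Finset.range (2*(m+1)), R j
        = (∑ j ∈ Finset.range (2*m), R j) + R (2*m) + R (2*m+1) := by
      have e : 2*(m+1) = (2*m) + 1 + 1 := by ring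
      rw [e, Finset.sum_range_succ, Finset.sum_range_succ]
    rw [e1]
    have e2 : R (2*(m+1)) = R (2*m+1) := by
      have e : 2*(m+1) = 2*m+2 := by ring
      rw [e, ← hpair m]
    rw [e2]
    push_cast
    ring


/-- type B dimension.  `d₁ = 2n₁+1`, `d₂ = 2n₂+1`, `d = d₁+d₂−1`,
`λ₁, λ₂` special orthogonal.  Then `W = W(λ₁,λ₂)` is an orthogonal partition of `d` and
`D_o(W) = D_o(λ₁) + D_o(λ₂) + d(d−1)/2 − d₁(d₁−1)/2 − d₂(d₂−1)/2`. -/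
theorem stmt3 (n1 n2 : ℕ) (lam1 lam2 : ℕ → ℕ)
    (h1 : IsPartitionOf lam1 (2*n1+1)) (h1o : IsOrthogonal lam1)
    (h1s : IsOrthogonal (ptrans lam1))
    (h2 : IsPartitionOf lam2 (2*n2+1)) (h2o : IsOrthogonal lam2)
    (h2s : IsOrthogonal (ptrans lam2)) :
    ∃ w : ℕ → ℕ, (∀ j, (w j : ℤ) = wald lam1 lam2 1 1 (2*n1+2*n2+1) j) ∧
      IsPartitionOf w (2*n1+2*n2+1) ∧ IsOrthogonal w ∧
      Dorth w (2*n1+2*n2+1)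
        = Dorth lam1 (2*n1+1) + Dorth lam2 (2*n2+1)
          + (((2*n1+2*n2+1 : ℕ) : ℚ) * (((2*n1+2*n2+1 : ℕ) : ℚ) - 1) / 2
             - ((2*n1+1 : ℕ) : ℚ) * (((2*n1+1 : ℕ) : ℚ) - 1) / 2
             - ((2*n2+1 : ℕ) : ℚ) * (((2*n2+1 : ℕ) : ℚ) - 1) / 2) := by
  obtain ⟨hA1, N1, hN1, hS1⟩ := h1
  obtain ⟨hA2, N2, hN2, hS2⟩ := h2
  set D : ℕ := 2*n1+2*n2+1 with hDdef
  have hd : D % 2 = 1 := by omega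
  have P2f : ∀ j, j % 2 = 1 → lam1 j % 2 = lam1 (j+1) % 2 := special_pairing hA1 hN1 h1s
  have P2g : ∀ j, j % 2 = 1 → lam2 j % 2 = lam2 (j+1) % 2 := special_pairing hA2 hN2 h2s
  have P1f : lam1 0 % 2 = 1 := first_odd hN1 hS1 P2f
  have P1g : lam2 0 % 2 = 1 := first_odd hN2 hS2 P2g
  set M : ℕ := N1 + N2 + 1 with hMdef
  have hsup1 : ∀ j, 2*M ≤ j → lam1 j = 0 := fun j hj => hN1 j (by omega)
  have hsup2 : ∀ j, 2*M ≤ j → lam2 j = 0 := fun j hj => hN2 j (by omega)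
  -- the Waldspurger sequence as a ℕ-sequence
  set w : ℕ → ℕ := fun j => (wald lam1 lam2 1 1 D j).toNat with hwdef
  have wcast : ∀ j, (w j : ℤ) = wald lam1 lam2 1 1 D j := by
    intro j
    rw [hwdef]
    apply Int.toNat_of_nonneg
    unfold wald
    rcases xi_mem (f := lam1) (g := lam2) (d := D) j with h | h | h
    · have e := xi_neg_elim hd h
      rw [h]; omega
    · rw [h]; omega
    · rw [h]; omega
  have wanti : Antitone w := by
    apply antitone_nat_of_succ_le
    intro j
    have m1 : lam1 (j+1) ≤ lam1 j := hA1 (by omega)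
    have m2 : lam2 (j+1) ≤ lam2 j := hA2 (by omega)
    have key : wald lam1 lam2 1 1 D (j+1) ≤ wald lam1 lam2 1 1 D j := by
      unfold wald
      rcases xi_mem (f := lam1) (g := lam2) (d := D) (j+1) with h2 | h2 | h2 <;>
        rcases xi_mem (f := lam1) (g := lam2) (d := D) j with h1 | h1 | h1
      · have e1 := xi_neg_elim hd h1
        have e2 := xi_neg_elim hd h2
        omega
      · have e2 := xi_neg_elim hd h2
        rw [h1, h2]; omega
      · have e1 := xi_pos_elim hd h1
        have e2 := xi_neg_elim hd h2
        rw [h1, h2]; omega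
      · have e1 := xi_neg_elim hd h1
        rw [h1, h2]; omega
      · rw [h1, h2]; omega
      · rw [h1, h2]; omega
      · have e1 := xi_neg_elim hd h1
        have e2 := xi_pos_elim hd h2
        simp only [Nat.add_sub_cancel] at e2
        rw [h1, h2]; omega
      · have e2 := xi_pos_elim hd h2
        simp only [Nat.add_sub_cancel] at e2
        rw [h1, h2]; omega
      · have e1 := xi_pos_elim hd h1
        have e2 := xi_pos_elim hd h2
        omega
    have c1 := wcast j
    have c2 := wcast (j+1)
    omega
  have hwsup : ∀ j, 2*M ≤ j → w j = 0 := by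
    intro j hj
    have hxz : xiSeq lam1 lam2 1 1 D j = 0 := by
      apply xi_zero_notodd hd
      rw [hsup1 j hj]
      omega
    have := wcast j
    unfold wald at this
    rw [hxz, hsup1 j hj, hsup2 j hj] at this
    omega
  have hRpair : ∀ i : ℕ, rz lam1 lam2 (2*i+1) = rz lam1 lam2 (2*i+2) := by
    intro i
    have a := P2f (2*i+1) (by omega)
    have b := P2g (2*i+1) (by omega)
    have e : 2*i+1+1 = 2*i+2 := by ring
    rw [e] at a b
    unfold rz
    split_ifs <;> omega
  have hR0 : rz lam1 lam2 0 = 1 := by unfold rz; rw [if_pos ⟨P1f, P1g⟩]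
  have hR2M : rz lam1 lam2 (2*M) = 0 := by
    unfold rz
    rw [if_neg]
    rw [hsup1 (2*M) (le_refl _)]
    omega
  have pairXi : ∀ i : ℕ, xiSeq lam1 lam2 1 1 D (2*i) + xiSeq lam1 lam2 1 1 D (2*i+1)
      = rz lam1 lam2 (2*i+1) - rz lam1 lam2 (2*i) := by
    intro i
    have m1 : lam1 (2*i+1) ≤ lam1 (2*i) := hA1 (by omega)
    have m2 : lam2 (2*i+1) ≤ lam2 (2*i) := hA2 (by omega)
    by_cases hdrop : lam1 (2*i+1) + lam2 (2*i+1) < lam1 (2*i) + lam2 (2*i)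
    · have hx0 : xiSeq lam1 lam2 1 1 D (2*i) = - rz lam1 lam2 (2*i) := by
        unfold rz
        by_cases hR : lam1 (2*i) % 2 = 1 ∧ lam2 (2*i) % 2 = 1
        · rw [if_pos hR, xi_neg_of hd (by omega) hR.1 hR.2 hdrop]
        · rw [if_neg hR, xi_zero_notodd hd hR]
          simp
      have hx1 : xiSeq lam1 lam2 1 1 D (2*i+1) = rz lam1 lam2 (2*i+1) := by
        unfold rz
        by_cases hR : lam1 (2*i+1) % 2 = 1 ∧ lam2 (2*i+1) % 2 = 1
        · rw [if_pos hR]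
          apply xi_pos_of hd (by omega) hR.1 hR.2
          simpa using hdrop
        · rw [if_neg hR, xi_zero_notodd hd hR]
      rw [hx0, hx1]; ring
    · have hx0 : xiSeq lam1 lam2 1 1 D (2*i) = 0 :=
        xi_zero_even_nodrop hd (by omega) hdrop
      have hx1 : xiSeq lam1 lam2 1 1 D (2*i+1) = 0 := by
        apply xi_zero_odd_nodrop hd (by omega)
        simp only [Nat.add_sub_cancel]
        omega
      have heq1 : lam1 (2*i+1) = lam1 (2*i) := by omega
      have heq2 : lam2 (2*i+1) = lam2 (2*i) := by omega
      have hRe : rz lam1 lam2 (2*i+1) = rz lam1 lam2 (2*i) := by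
        unfold rz; rw [heq1, heq2]
      rw [hx0, hx1, hRe]; ring
  have E1 : ∑ j ∈ Finset.range (2*M), xiSeq lam1 lam2 1 1 D j = -1 := by
    rw [sum_pair]
    rw [Finset.sum_congr rfl (fun i _ => pairXi i)]
    have step : ∀ i ∈ Finset.range M, rz lam1 lam2 (2*i+1) - rz lam1 lam2 (2*i)
        = (fun i => rz lam1 lam2 (2*i)) (i+1) - (fun i => rz lam1 lam2 (2*i)) i := by
      intro i _
      simp only
      rw [hRpair i]
      have e : 2*(i+1) = 2*i+2 := by ring
      rw [e]
    rw [Finset.sum_congr rfl step, Finset.sum_range_sub (fun i => rz lam1 lam2 (2*i))]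
    rw [hR2M, hR0]
    norm_num
  have hRz01 : ∀ j : ℕ, rz lam1 lam2 j = 0 ∨ rz lam1 lam2 j = 1 := by
    intro j; unfold rz; split_ifs <;> simp
  have sum_ext1 : ∑ j ∈ Finset.range (2*M), lam1 j = 2*n1+1 := by
    rw [← hS1]; symm
    apply Finset.sum_subset (Finset.range_subset_range.mpr (by omega))
    intro x _ hx
    exact hN1 x (by simp at hx; omega)
  have sum_ext2 : ∑ j ∈ Finset.range (2*M), lam2 j = 2*n2+1 := by
    rw [← hS2]; symm
    apply Finset.sum_subset (Finset.range_subset_range.mpr (by omega))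
    intro x _ hx
    exact hN2 x (by simp at hx; omega)
  have hsumw : ∑ j ∈ Finset.range (2*M), w j = D := by
    have hz : (∑ j ∈ Finset.range (2*M), (w j : ℤ)) = (D : ℤ) := by
      rw [Finset.sum_congr rfl (fun j _ => wcast j)]
      unfold wald
      rw [Finset.sum_add_distrib, Finset.sum_add_distrib, E1]
      rw [← Nat.cast_sum, ← Nat.cast_sum, sum_ext1, sum_ext2]
      rw [hDdef]
      push_cast
      ring
    exact_mod_cast hz
  have hwpart : IsPartitionOf w D := ⟨wanti, 2*M, hwsup, hsumw⟩
  have pairXi2 : ∀ i : ℕ,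
      (2*((2*i : ℕ):ℤ)+1)*xiSeq lam1 lam2 1 1 D (2*i)
        + (2*((2*i+1 : ℕ):ℤ)+1)*xiSeq lam1 lam2 1 1 D (2*i+1)
      = (xne lam1 lam2 D (2*i) + xne lam1 lam2 D (2*i+1))
        + ((4*(i:ℤ)+2)*(rz lam1 lam2 (2*i+1) - rz lam1 lam2 (2*i))) := by
    intro i
    have m1 : lam1 (2*i+1) ≤ lam1 (2*i) := hA1 (by omega)
    have m2 : lam2 (2*i+1) ≤ lam2 (2*i) := hA2 (by omega)
    by_cases hdrop : lam1 (2*i+1) + lam2 (2*i+1) < lam1 (2*i) + lam2 (2*i)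
    · have hx0 : xiSeq lam1 lam2 1 1 D (2*i) = - rz lam1 lam2 (2*i) := by
        unfold rz
        by_cases hR : lam1 (2*i) % 2 = 1 ∧ lam2 (2*i) % 2 = 1
        · rw [if_pos hR, xi_neg_of hd (by omega) hR.1 hR.2 hdrop]
        · rw [if_neg hR, xi_zero_notodd hd hR]
          simp
      have hx1 : xiSeq lam1 lam2 1 1 D (2*i+1) = rz lam1 lam2 (2*i+1) := by
        unfold rz
        by_cases hR : lam1 (2*i+1) % 2 = 1 ∧ lam2 (2*i+1) % 2 = 1
        · rw [if_pos hR]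
          apply xi_pos_of hd (by omega) hR.1 hR.2
          simpa using hdrop
        · rw [if_neg hR, xi_zero_notodd hd hR]
      have hn0 : xne lam1 lam2 D (2*i) = rz lam1 lam2 (2*i) := by
        unfold xne
        rw [hx0]
        rcases hRz01 (2*i) with h | h <;> rw [h] <;> norm_num
      have hn1 : xne lam1 lam2 D (2*i+1) = rz lam1 lam2 (2*i+1) := by
        unfold xne
        rw [hx1]
        rcases hRz01 (2*i+1) with h | h <;> rw [h] <;> norm_num
      rw [hx0, hx1, hn0, hn1]
      push_cast
      ring
    · have hx0 : xiSeq lam1 lam2 1 1 D (2*i) = 0 :=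
        xi_zero_even_nodrop hd (by omega) hdrop
      have hx1 : xiSeq lam1 lam2 1 1 D (2*i+1) = 0 := by
        apply xi_zero_odd_nodrop hd (by omega)
        simp only [Nat.add_sub_cancel]
        omega
      have heq1 : lam1 (2*i+1) = lam1 (2*i) := by omega
      have heq2 : lam2 (2*i+1) = lam2 (2*i) := by omega
      have hRe : rz lam1 lam2 (2*i+1) = rz lam1 lam2 (2*i) := by
        unfold rz; rw [heq1, heq2]
      have hn0 : xne lam1 lam2 D (2*i) = 0 := by
        unfold xne; rw [hx0]; norm_num
      have hn1 : xne lam1 lam2 D (2*i+1) = 0 := by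
        unfold xne; rw [hx1]; norm_num
      rw [hx0, hx1, hn0, hn1, hRe]
      push_cast
      ring
  have tele : ∑ i ∈ Finset.range M, ((4*(i:ℤ)+2)*(rz lam1 lam2 (2*i+1) - rz lam1 lam2 (2*i)))
      = -2 * ∑ j ∈ Finset.range (2*M), rz lam1 lam2 j := by
    have ht := tele_gen (rz lam1 lam2) hRpair M
    rw [hR2M] at ht
    rw [ht]
    ring
  have E2 : ∑ j ∈ Finset.range (2*M), (2*(j:ℤ)+1) * xiSeq lam1 lam2 1 1 D j
      = (∑ j ∈ Finset.range (2*M), xne lam1 lam2 D j)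
        - 2 * ∑ j ∈ Finset.range (2*M), rz lam1 lam2 j := by
    rw [sum_pair (fun j => (2*(j:ℤ)+1) * xiSeq lam1 lam2 1 1 D j) M,
      Finset.sum_congr rfl (fun i _ => pairXi2 i), Finset.sum_add_distrib, tele,
      sum_pair (fun j => xne lam1 lam2 D j) M]
    ring
  have E3ptw : ∀ j : ℕ, (if w j % 2 = 1 then (1:ℤ) else 0)
      - (if lam1 j % 2 = 1 then (1:ℤ) else 0) - (if lam2 j % 2 = 1 then (1:ℤ) else 0)
      = xne lam1 lam2 D j - 2 * rz lam1 lam2 j := by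
    intro j
    rcases xi_mem (f := lam1) (g := lam2) (d := D) j with h | h | h
    · have e := xi_neg_elim hd h
      have hwp : w j % 2 = 1 := by
        have hc := wcast j; unfold wald at hc; rw [h] at hc; omega
      unfold xne rz
      rw [h, if_pos hwp, if_pos e.2.1, if_pos e.2.2.1, if_pos (show lam1 j % 2 = 1 ∧ lam2 j % 2 = 1 from ⟨e.2.1, e.2.2.1⟩),
        if_neg (by norm_num : ¬ (-1 : ℤ) = 0)]
      norm_num
    · have hwj : w j = lam1 j + lam2 j := by
        have hc := wcast j; unfold wald at hc; rw [h] at hc; omega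
      unfold xne rz
      rw [h, hwj, if_pos rfl]
      split_ifs <;> omega
    · have e := xi_pos_elim hd h
      have hwp : w j % 2 = 1 := by
        have hc := wcast j; unfold wald at hc; rw [h] at hc; omega
      unfold xne rz
      rw [h, if_pos hwp, if_pos e.2.1, if_pos e.2.2.1, if_pos (show lam1 j % 2 = 1 ∧ lam2 j % 2 = 1 from ⟨e.2.1, e.2.2.1⟩),
        if_neg (by norm_num : ¬ (1 : ℤ) = 0)]
      norm_num
  have E3 : (∑ j ∈ Finset.range (2*M), (if w j % 2 = 1 then (1:ℤ) else 0))
      - (∑ j ∈ Finset.range (2*M), (if lam1 j % 2 = 1 then (1:ℤ) else 0))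
      - (∑ j ∈ Finset.range (2*M), (if lam2 j % 2 = 1 then (1:ℤ) else 0))
      = (∑ j ∈ Finset.range (2*M), xne lam1 lam2 D j)
        - 2 * ∑ j ∈ Finset.range (2*M), rz lam1 lam2 j := by
    rw [← Finset.sum_sub_distrib, ← Finset.sum_sub_distrib,
      Finset.sum_congr rfl (fun j _ => E3ptw j), Finset.sum_sub_distrib, ← Finset.mul_sum]
  have hsplit : ∑ j ∈ Finset.range (2*M), (2*(j:ℤ)+1) * (w j : ℤ)
      = (∑ j ∈ Finset.range (2*M), (2*(j:ℤ)+1) * (lam1 j:ℤ))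
        + (∑ j ∈ Finset.range (2*M), (2*(j:ℤ)+1) * (lam2 j:ℤ))
        + ∑ j ∈ Finset.range (2*M), (2*(j:ℤ)+1) * xiSeq lam1 lam2 1 1 D j := by
    rw [← Finset.sum_add_distrib, ← Finset.sum_add_distrib]
    apply Finset.sum_congr rfl
    intro j _
    rw [wcast j]; unfold wald; ring
  have cw : ∀ x : ℕ, 1 ≤ x → ∀ j, (j < cnt w x ↔ x ≤ w j) :=
    fun x hx j => lt_cnt_iff wanti hwsup hx j
  have horthw : IsOrthogonal w := by
    intro k hk hkev
    rw [Nat.even_iff] at hkev ⊢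
    rw [pmult_eq_cnt wanti hwsup (by omega : 1 ≤ k)]
    set α := cnt w k with hαdef
    set β := cnt w (k+1) with hβdef
    have hβα : β ≤ α := cnt_antitone_gen wanti hwsup (by omega) (by omega)
    rcases Nat.eq_or_lt_of_le hβα with heq | hlt
    · rw [heq]; omega
    have hblock : ∀ j, β ≤ j → j < α → w j = k := by
      intro j hj1 hj2
      have a1 : k ≤ w j := (cw k (by omega) j).mp hj2
      have a2 : ¬ (k+1 ≤ w j) := by rw [← cw (k+1) (by omega) j]; omega
      omega
    have hwα : ¬ (k ≤ w α) := by rw [← cw k (by omega) α]; omega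
    have hxiblock : ∀ j, β ≤ j → j < α → xiSeq lam1 lam2 1 1 D j = 0 ∧ lam1 j + lam2 j = k := by
      intro j hj1 hj2
      have hwj := hblock j hj1 hj2
      rcases xi_mem (f := lam1) (g := lam2) (d := D) j with h | h | h
      · have e := xi_neg_elim hd h
        have hc := wcast j; unfold wald at hc; rw [h] at hc
        omega
      · have hc := wcast j; unfold wald at hc; rw [h] at hc
        exact ⟨h, by omega⟩
      · have e := xi_pos_elim hd h
        have hc := wcast j; unfold wald at hc; rw [h] at hc
        omega
    have hμβ := (hxiblock β (le_refl β) hlt).2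
    have hconst : ∀ j, β ≤ j → j < α → lam1 j = lam1 β ∧ lam2 j = lam2 β := by
      intro j hj1 hj2
      have c1 := (hxiblock j hj1 hj2).2
      have m1 : lam1 j ≤ lam1 β := hA1 hj1
      have m2 : lam2 j ≤ lam2 β := hA2 hj1
      omega
    have hlast1 : β ≤ α - 1 := by omega
    have hlast2 : α - 1 < α := by omega
    have hxilast := hxiblock (α-1) hlast1 hlast2
    have hclast := hconst (α-1) hlast1 hlast2
    have e0 : α - 1 + 1 = α := by omega
    by_cases hcase : lam1 β % 2 = 1
    · -- both components odd on the block
      have hgodd : lam2 β % 2 = 1 := by omega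
      have hβeven : β % 2 = 0 := by
        by_contra hbo
        have hβ1 : β % 2 = 1 := by omega
        have hnd : ¬ (lam1 β + lam2 β < lam1 (β-1) + lam2 (β-1)) := by
          intro hdrp
          have hp := xi_pos_of hd hβ1 hcase hgodd hdrp
          have hx0 := (hxiblock β (le_refl β) hlt).1
          omega
        have m1 : lam1 β ≤ lam1 (β-1) := hA1 (by omega)
        have m2 : lam2 β ≤ lam2 (β-1) := hA2 (by omega)
        have he1 : lam1 (β-1) = lam1 β := by omega
        have he2 : lam2 (β-1) = lam2 β := by omega
        have hx : xiSeq lam1 lam2 1 1 D (β-1) = 0 := by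
          apply xi_zero_even_nodrop hd (by omega)
          have e : β - 1 + 1 = β := by omega
          rw [e]
          omega
        have hc := wcast (β-1); unfold wald at hc; rw [hx] at hc
        have hge : k + 1 ≤ w (β-1) := (cw (k+1) (by omega) (β-1)).mp (by omega)
        omega
      have hαeven : α % 2 = 0 := by
        by_contra hao
        have he : (α - 1) % 2 = 0 := by omega
        have hfodd : lam1 (α-1) % 2 = 1 := by rw [hclast.1]; exact hcase
        have hgodd2 : lam2 (α-1) % 2 = 1 := by rw [hclast.2]; exact hgodd
        have hnd : ¬ (lam1 α + lam2 α < lam1 (α-1) + lam2 (α-1)) := by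
          intro hdrp
          have hneg := xi_neg_of hd he hfodd hgodd2 (by rw [e0]; exact hdrp)
          have hx0 := hxilast.1
          omega
        have m1 : lam1 α ≤ lam1 (α-1) := hA1 (by omega)
        have m2 : lam2 α ≤ lam2 (α-1) := hA2 (by omega)
        have he1 : lam1 α = lam1 (α-1) := by omega
        have he2 : lam2 α = lam2 (α-1) := by omega
        have hx : xiSeq lam1 lam2 1 1 D α = 0 := by
          apply xi_zero_odd_nodrop hd (by omega)
          omega
        have hc := wcast α; unfold wald at hc; rw [hx] at hc
        have hxl2 := hxilast.2
        omega
      omega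
    · -- both components even on the block
      have hfe : lam1 β % 2 = 0 := by omega
      have hge : lam2 β % 2 = 0 := by omega
      have hβpos : β ≠ 0 := by
        intro h0
        rw [h0] at hfe
        omega
      have hβodd : β % 2 = 1 := by
        have hgeb : k + 1 ≤ w (β-1) := (cw (k+1) (by omega) (β-1)).mp (by omega)
        have m1 : lam1 β ≤ lam1 (β-1) := hA1 (by omega)
        have m2 : lam2 β ≤ lam2 (β-1) := hA2 (by omega)
        have hμdrop : lam1 β + lam2 β < lam1 (β-1) + lam2 (β-1) := by
          by_contra hnd
          have he1 : lam1 (β-1) = lam1 β := by omega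
          have he2 : lam2 (β-1) = lam2 β := by omega
          have hx : xiSeq lam1 lam2 1 1 D (β-1) = 0 := by
            apply xi_zero_notodd hd
            rw [he1]
            omega
          have hc := wcast (β-1); unfold wald at hc; rw [hx] at hc
          omega
        rcases (by omega : lam1 β < lam1 (β-1) ∨ lam2 β < lam2 (β-1)) with hdf | hdg
        · exact block_start_odd hA1 hN1 h1o P1f P2f β hfe (Or.inr hdf)
        · exact block_start_odd hA2 hN2 h2o P1g P2g β hge (Or.inr hdg)
      have hαodd : α % 2 = 1 := by
        have hfel : lam1 (α-1) % 2 = 0 := by rw [hclast.1]; exact hfe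
        have hgel : lam2 (α-1) % 2 = 0 := by rw [hclast.2]; exact hge
        have m1 : lam1 α ≤ lam1 (α-1) := hA1 (by omega)
        have m2 : lam2 α ≤ lam2 (α-1) := hA2 (by omega)
        have hxl2 := hxilast.2
        have hμdrop : lam1 α + lam2 α < lam1 (α-1) + lam2 (α-1) := by
          by_contra hnd
          have he1 : lam1 α = lam1 (α-1) := by omega
          have he2 : lam2 α = lam2 (α-1) := by omega
          have hx : xiSeq lam1 lam2 1 1 D α = 0 := by
            apply xi_zero_notodd hd
            rw [he1]
            omega
          have hc := wcast α; unfold wald at hc; rw [hx] at hc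
          omega
        rcases (by omega : lam1 α < lam1 (α-1) ∨ lam2 α < lam2 (α-1)) with hdf | hdg
        · have hend := block_end_even hA1 hN1 h1o P1f P2f (α-1) hfel (by rw [e0]; exact hdf)
          omega
        · have hend := block_end_even hA2 hN2 h2o P1g P2g (α-1) hgel (by rw [e0]; exact hdg)
          omega
      omega
  -- cast versions of the sum formulas
  have SSTwZ : (sumSqTrans w : ℤ) = ∑ j ∈ Finset.range (2*M), (2*(j:ℤ)+1) * (w j : ℤ) := by
    rw [sumSqTrans_eq wanti hwsup]
    push_cast
    rfl
  have SST1Z : (sumSqTrans lam1 : ℤ) = ∑ j ∈ Finset.range (2*M), (2*(j:ℤ)+1) * (lam1 j : ℤ) := by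
    rw [sumSqTrans_eq hA1 hsup1]
    push_cast
    rfl
  have SST2Z : (sumSqTrans lam2 : ℤ) = ∑ j ∈ Finset.range (2*M), (2*(j:ℤ)+1) * (lam2 j : ℤ) := by
    rw [sumSqTrans_eq hA2 hsup2]
    push_cast
    rfl
  have OwZ : (oddCount w : ℤ) = ∑ j ∈ Finset.range (2*M), (if w j % 2 = 1 then (1:ℤ) else 0) := by
    rw [oddCount_eq hwsup, Nat.cast_sum]
    apply Finset.sum_congr rfl
    intro j _
    split_ifs <;> simp
  have O1Z : (oddCount lam1 : ℤ) = ∑ j ∈ Finset.range (2*M), (if lam1 j % 2 = 1 then (1:ℤ) else 0) := by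
    rw [oddCount_eq hsup1, Nat.cast_sum]
    apply Finset.sum_congr rfl
    intro j _
    split_ifs <;> simp
  have O2Z : (oddCount lam2 : ℤ) = ∑ j ∈ Finset.range (2*M), (if lam2 j % 2 = 1 then (1:ℤ) else 0) := by
    rw [oddCount_eq hsup2, Nat.cast_sum]
    apply Finset.sum_congr rfl
    intro j _
    split_ifs <;> simp
  have keyZ : (sumSqTrans w : ℤ) + (oddCount lam1 : ℤ) + (oddCount lam2 : ℤ)
      = (sumSqTrans lam1 : ℤ) + (sumSqTrans lam2 : ℤ) + (oddCount w : ℤ) := by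
    rw [SSTwZ, SST1Z, SST2Z, OwZ, O1Z, O2Z]
    linarith [E2, E3, hsplit]
  have keyQ : (sumSqTrans w : ℚ) + (oddCount lam1 : ℚ) + (oddCount lam2 : ℚ)
      = (sumSqTrans lam1 : ℚ) + (sumSqTrans lam2 : ℚ) + (oddCount w : ℚ) := by
    exact_mod_cast keyZ
  refine ⟨w, wcast, hwpart, horthw, ?_⟩
  unfold Dorth
  linarith [keyQ]
end

section
/- Let d_1 = 2a and d_2 = 2b be even numbers, d = 2n = d_1+d_2, let λ_1 be a special symplectic partition of d_1 and λ_2 a special orthogonal partition of d_2. Then W = W(λ_1,λ_2) (type C data) is a symplectic partition of d and D_sp(W) = D_sp(λ_1) + D_o(λ_2) + n(2n+1) − a(2a+1) − b(2b−1). -/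
namespace S4


lemma card_setIco (a b : ℕ) : Nat.card (Set.Ico a b) = b - a := by
  rw [← Finset.coe_Ico, Nat.card_coe_set_eq, Set.ncard_coe_finset, Nat.card_Ico]

lemma trans_iff {f : ℕ → ℕ} (hf : Antitone f) {N : ℕ} (hN : ∀ j, N ≤ j → f j = 0)
    (c j : ℕ) : c + 1 ≤ f j ↔ j < ptrans f c := by
  have hsub : {j | c + 1 ≤ f j} ⊆ Set.Iio N := by
    intro j hj
    by_contra h
    have := hN j (by simpa [Set.mem_Iio] using not_lt.mp (by simpa using h))
    simp [Set.mem_setOf_eq, this] at hj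
  have hfin : {j | c + 1 ≤ f j}.Finite := (Set.finite_Iio N).subset hsub
  have hcard : ptrans f c = ({j | c + 1 ≤ f j} : Set ℕ).ncard := by
    rw [ptrans, ← Nat.card_coe_set_eq]
    rfl
  constructor
  · intro hj
    have hIic : Set.Iic j ⊆ {j | c + 1 ≤ f j} := fun i hi => le_trans hj (hf hi)
    have : (Set.Iic j).ncard ≤ ({j | c + 1 ≤ f j} : Set ℕ).ncard :=
      Set.ncard_le_ncard hIic hfin
    have hIicc : (Set.Iic j).ncard = j + 1 := by
      rw [← Finset.coe_Iic, Set.ncard_coe_finset, Nat.card_Iic]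
    omega
  · intro hj
    by_contra h
    have hsub2 : {j | c + 1 ≤ f j} ⊆ Set.Iio j := by
      intro m hm
      by_contra hm2
      exact h (le_trans hm (hf (not_lt.mp (by simpa using hm2))))
    have : ({j | c + 1 ≤ f j} : Set ℕ).ncard ≤ (Set.Iio j).ncard :=
      Set.ncard_le_ncard hsub2 (Set.finite_Iio j)
    have : (Set.Iio j).ncard = j := by
      rw [← Finset.coe_Iio, Set.ncard_coe_finset, Nat.card_Iio]
    omega



lemma ptrans_mono {f : ℕ → ℕ} (hf : Antitone f) {N : ℕ} (hN : ∀ j, N ≤ j → f j = 0)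
    {c c' : ℕ} (h : c ≤ c') : ptrans f c' ≤ ptrans f c := by
  by_contra hcon
  push_neg at hcon
  have h1 : c' + 1 ≤ f (ptrans f c) := (trans_iff hf hN c' _).mpr hcon
  have h2 : ¬ (c + 1 ≤ f (ptrans f c)) := by
    intro h3
    exact absurd ((trans_iff hf hN c _).mp h3) (lt_irrefl _)
  omega

lemma run_eq_Ico {f : ℕ → ℕ} (hf : Antitone f) {N : ℕ} (hN : ∀ j, N ≤ j → f j = 0)
    {k : ℕ} (hk : 1 ≤ k) : {j | f j = k} = Set.Ico (ptrans f k) (ptrans f (k-1)) := by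
  ext j
  simp only [Set.mem_setOf_eq, Set.mem_Ico]
  constructor
  · intro h
    constructor
    · by_contra hc
      have := (trans_iff hf hN k j).mpr (by omega)
      omega
    · exact (trans_iff hf hN (k-1) j).mp (by omega)
  · rintro ⟨h1, h2⟩
    have ha : ¬ (k + 1 ≤ f j) := fun hc => by
      have := (trans_iff hf hN k j).mp hc; omega
    have hb : (k-1) + 1 ≤ f j := (trans_iff hf hN (k-1) j).mpr h2
    omega

lemma pmult_eq {f : ℕ → ℕ} (hf : Antitone f) {N : ℕ} (hN : ∀ j, N ≤ j → f j = 0)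
    {k : ℕ} (hk : 1 ≤ k) : pmult f k = ptrans f (k-1) - ptrans f k := by
  rw [pmult, show {j : ℕ // f j = k} = ↥{j | f j = k} from rfl, run_eq_Ico hf hN hk,
    card_setIco]

lemma pmult_ptrans {f : ℕ → ℕ} (hf : Antitone f) {N : ℕ} (hN : ∀ j, N ≤ j → f j = 0)
    {k : ℕ} (hk : 1 ≤ k) : pmult (ptrans f) k = f (k-1) - f k := by
  have hset : {c | ptrans f c = k} = Set.Ico (f k) (f (k-1)) := by
    ext c
    simp only [Set.mem_setOf_eq, Set.mem_Ico]
    constructor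
    · intro h
      constructor
      · by_contra hc
        push_neg at hc
        have := (trans_iff hf hN c k).mp (by omega)
        omega
      · have := (trans_iff hf hN c (k-1)).mpr (by omega)
        omega
    · rintro ⟨h1, h2⟩
      have ha : k - 1 < ptrans f c := (trans_iff hf hN c (k-1)).mp (by omega)
      have hb : ¬ (k < ptrans f c) := fun hc => by
        have := (trans_iff hf hN c k).mpr hc; omega
      omega
  rw [pmult, show {c : ℕ // ptrans f c = k} = ↥{c | ptrans f c = k} from rfl, hset, card_setIco]

lemma pairparity {f : ℕ → ℕ} (hf : Antitone f) {N : ℕ} (hN : ∀ j, N ≤ j → f j = 0)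
    (hsym : ∀ k, 0 < k → Odd k → Even (pmult (ptrans f) k)) :
    ∀ i, f (2*i) % 2 = f (2*i+1) % 2 := by
  intro i
  have h := hsym (2*i+1) (by omega) ⟨i, by omega⟩
  rw [pmult_ptrans hf hN (by omega)] at h
  have hle : f (2*i+1) ≤ f (2*i+1-1) := hf (by omega)
  rw [show 2*i+1-1 = 2*i from rfl] at *
  rw [Nat.even_sub hle] at h
  simp only [Nat.even_iff] at h
  omega

lemma lemB {f : ℕ → ℕ} (hf : Antitone f) {N : ℕ} (hN : ∀ j, N ≤ j → f j = 0)
    (pp : ∀ i, f (2*i) % 2 = f (2*i+1) % 2) (ε : ℕ)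
    (hm : ∀ k, 0 < k → k % 2 = ε → Even (pmult f k)) :
    ∀ u k, ptrans f k = u → k % 2 = ε → (∃ j, f j = k) → Even u := by
  intro u
  induction u using Nat.strong_induction_on with
  | _ u IH =>
    intro k hu hke ⟨j0, hj0⟩
    rcases Nat.even_or_odd u with he | ho
    · exact he
    exfalso
    have hu1 : 1 ≤ u := by rcases ho with ⟨m, hm'⟩; omega
    -- f u = k
    have hfu_le : ¬ (k + 1 ≤ f u) := fun hc => by
      have := (trans_iff hf hN k u).mp hc; omega
    have hj0u : u ≤ j0 := by
      by_contra hc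
      push_neg at hc
      have := (trans_iff hf hN k j0).mpr (by omega)
      omega
    have hfu : f u = k := le_antisymm (by omega) (hj0 ▸ hf hj0u)
    have hfu1 : k + 1 ≤ f (u-1) := (trans_iff hf hN k (u-1)).mpr (by omega)
    set k' := f (u-1) with hk'
    have hk'pos : 0 < k' := by omega
    -- parity of k'
    have hi : u - 1 = 2 * ((u-1)/2) ∧ u = 2 * ((u-1)/2) + 1 := by
      rcases ho with ⟨m, hm'⟩; omega
    have hk'par : k' % 2 = ε := by
      have hpp := pp ((u-1)/2)
      rw [← hi.2, ← hi.1] at hpp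
      rw [hk', hpp, hfu, hke]
    -- ptrans f (k'-1) = u
    have h1 : u - 1 < ptrans f (k'-1) := (trans_iff hf hN (k'-1) (u-1)).mp (by omega)
    have h2 : ¬ (u < ptrans f (k'-1)) := fun hc => by
      have := (trans_iff hf hN (k'-1) u).mpr hc; omega
    have hpk' : ptrans f (k'-1) = u := by omega
    set u' := ptrans f k' with hu'
    have hu'lt : u' ≤ u - 1 := by
      by_contra hc
      push_neg at hc
      have := (trans_iff hf hN k' (u-1)).mpr (by omega)
      omega
    have hmult := hm k' hk'pos hk'par
    rw [pmult_eq hf hN (by omega), hpk'] at hmult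
    have hEu' : Even u' := IH u' (by omega) k' rfl hk'par ⟨u-1, rfl⟩
    rw [Nat.even_iff] at *
    rcases hEu' with _
    have : (u - u') % 2 = 0 := hmult
    omega

lemma ptrans_le_bound {f : ℕ → ℕ} (hf : Antitone f) {N : ℕ} (hN : ∀ j, N ≤ j → f j = 0)
    (c : ℕ) : ptrans f c ≤ N := by
  by_contra h
  push_neg at h
  have := (trans_iff hf hN c N).mpr h
  have := hN N le_rfl
  omega

lemma ptrans_sum {f : ℕ → ℕ} (hf : Antitone f) {N : ℕ} (hN : ∀ j, N ≤ j → f j = 0)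
    (c : ℕ) : ptrans f c = ∑ j ∈ Finset.range N, (if c + 1 ≤ f j then 1 else 0) := by
  rw [Finset.sum_boole]
  have hfil : (Finset.range N).filter (fun j => c + 1 ≤ f j) = Finset.range (ptrans f c) := by
    ext j
    simp only [Finset.mem_filter, Finset.mem_range]
    constructor
    · rintro ⟨_, h2⟩
      exact (trans_iff hf hN c j).mp h2
    · intro h
      exact ⟨lt_of_lt_of_le h (ptrans_le_bound hf hN c), (trans_iff hf hN c j).mpr h⟩
  rw [hfil, Finset.card_range]; simp

lemma min_eq_indsum {f : ℕ → ℕ} (hf : Antitone f) (i j : ℕ) :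
    min (f i) (f j) = ∑ k ∈ Finset.range (f 0), (if k + 1 ≤ f i ∧ k + 1 ≤ f j then 1 else 0) := by
  rw [Finset.sum_boole]
  have : (Finset.range (f 0)).filter (fun k => k + 1 ≤ f i ∧ k + 1 ≤ f j)
      = Finset.range (min (f i) (f j)) := by
    ext k
    simp only [Finset.mem_filter, Finset.mem_range]
    have h1 : f i ≤ f 0 := hf (Nat.zero_le i)
    have h2 : f j ≤ f 0 := hf (Nat.zero_le j)
    omega
  rw [this, Finset.card_range]; simp

lemma minsum {f : ℕ → ℕ} (hf : Antitone f) :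
    ∀ N, ∑ i ∈ Finset.range N, ∑ j ∈ Finset.range N, min (f i) (f j)
      = ∑ j ∈ Finset.range N, (2*j+1) * f j := by
  intro N
  induction N with
  | zero => simp
  | succ N ih =>
    rw [Finset.sum_range_succ (f := fun i => ∑ j ∈ Finset.range (N+1), min (f i) (f j))]
    simp only [Finset.sum_range_succ]
    have hmin1 : ∀ i, i < N → min (f i) (f N) = f N := by
      intro i hi; exact min_eq_right (hf (le_of_lt hi))
    have hmin2 : ∀ j, j < N → min (f N) (f j) = f N := by
      intro j hj; exact min_eq_left (hf (le_of_lt hj))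
    have e1 : ∑ i ∈ Finset.range N, (∑ j ∈ Finset.range N, min (f i) (f j) + min (f i) (f N))
        = ∑ i ∈ Finset.range N, ∑ j ∈ Finset.range N, min (f i) (f j) + N * f N := by
      rw [Finset.sum_add_distrib]
      congr 1
      rw [Finset.sum_congr rfl (fun i hi => hmin1 i (Finset.mem_range.mp hi))]
      simp [mul_comm]
    have e2 : ∑ j ∈ Finset.range N, min (f N) (f j) = N * f N := by
      rw [Finset.sum_congr rfl (fun j hj => hmin2 j (Finset.mem_range.mp hj))]
      simp [mul_comm]
    rw [e1, e2, ih, min_self]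
    ring

lemma sumSqTrans_eq {f : ℕ → ℕ} (hf : Antitone f) {N : ℕ} (hN : ∀ j, N ≤ j → f j = 0) :
    sumSqTrans f = ∑ j ∈ Finset.range N, (2*j+1) * f j := by
  rw [sumSqTrans]
  have step : ∀ k, (ptrans f k)^2
      = ∑ i ∈ Finset.range N, ∑ j ∈ Finset.range N,
        (if k + 1 ≤ f i ∧ k + 1 ≤ f j then 1 else 0) := by
    intro k
    rw [sq, ptrans_sum hf hN k, Finset.sum_mul_sum]
    apply Finset.sum_congr rfl
    intro i _
    apply Finset.sum_congr rfl
    intro j _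
    by_cases h1 : k + 1 ≤ f i <;> by_cases h2 : k + 1 ≤ f j <;> simp [h1, h2]
  rw [Finset.sum_congr rfl (fun k _ => step k), Finset.sum_comm]
  rw [Finset.sum_congr rfl (fun i (_ : i ∈ Finset.range N) => Finset.sum_comm ..)]
  have : ∀ i ∈ Finset.range N, ∀ j ∈ Finset.range N,
      ∑ k ∈ Finset.range (f 0), (if k + 1 ≤ f i ∧ k + 1 ≤ f j then 1 else 0)
        = min (f i) (f j) := fun i _ j _ => (min_eq_indsum hf i j).symm
  rw [Finset.sum_congr rfl (fun i hi => Finset.sum_congr rfl (fun j hj => this i hi j hj))]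
  exact minsum hf N

lemma oddCount_eq {f : ℕ → ℕ} {N : ℕ} (hN : ∀ j, N ≤ j → f j = 0) :
    oddCount f = ∑ j ∈ Finset.range N, f j % 2 := by
  have hset : {j | Odd (f j)} = ↑((Finset.range N).filter (fun j => f j % 2 = 1)) := by
    ext j
    simp only [Set.mem_setOf_eq, Finset.coe_filter, Set.mem_setOf_eq, Finset.mem_range]
    rw [Nat.odd_iff]
    constructor
    · intro h
      refine ⟨?_, h⟩
      by_contra hc
      have := hN j (by omega)
      omega
    · tauto
  rw [oddCount, show {j : ℕ // Odd (f j)} = ↥{j | Odd (f j)} from rfl, hset,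
    Nat.card_coe_set_eq, Set.ncard_coe_finset]
  rw [Finset.card_filter]
  apply Finset.sum_congr rfl
  intro j _
  by_cases h : f j % 2 = 1 <;> simp [h] <;> omega



def xi' (f g : ℕ → ℕ) (j : ℕ) : ℤ :=
  if j % 2 = 0 then
    (if f j % 2 = 0 ∧ g j % 2 = 1 ∧ (j = 0 ∨ f j + g j < f (j-1) + g (j-1)) then 1 else 0)
  else
    (if f j % 2 = 0 ∧ g j % 2 = 1 ∧ f (j+1) + g (j+1) < f j + g j then -1 else 0)

lemma xiSeq_eq_xi' (f g : ℕ → ℕ) (d : ℕ) (hd : d % 2 = 0) (j : ℕ) :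
    xiSeq f g 0 1 d j = xi' f g j := by
  unfold xiSeq xi'
  split_ifs <;> omega

def U' (f g : ℕ → ℕ) (j : ℕ) : ℤ :=
  if f j % 2 = 0 ∧ g j % 2 = 1 ∧ f (j+1) + g (j+1) = f j + g j then 1 else 0

def GG (f g : ℕ → ℕ) (p : ℕ) : ℤ := if p = 0 then 0 else U' f g (2*p-1)

def GG2 (f g : ℕ → ℕ) (p : ℕ) : ℤ := if p = 0 then 0 else (4*p) * U' f g (2*p-1)

lemma xi'_pair (f g : ℕ → ℕ) (hf : Antitone f) (hg : Antitone g)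
    (pf : ∀ i, f (2*i) % 2 = f (2*i+1) % 2) (pg : ∀ i, g (2*i) % 2 = g (2*i+1) % 2) (i : ℕ) :
    xi' f g (2*i) + xi' f g (2*i+1) = GG f g (i+1) - GG f g i := by
  rcases i with _ | i
  · simp only [GG, xi', U']
    norm_num
    have h1 : f 2 ≤ f 1 := hf (by omega)
    have h2 : g 2 ≤ g 1 := hg (by omega)
    have h3 := pf 0
    have h4 := pg 0
    norm_num at h3 h4
    split_ifs <;> omega
  · simp only [GG, xi', U']
    have e0 : 2*(i+1) = 2*i+2 := by ring
    have e1 : 2*(i+1)+1 = 2*i+3 := by ring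
    have e2 : 2*(i+1+1) - 1 = 2*i+3 := by omega
    have e3 : 2*(i+1) - 1 = 2*i+1 := by omega
    rw [e2, e3, e1, e0]
    rw [if_pos (show (2*i+2) % 2 = 0 by omega), if_neg (show ¬ ((2*i+3) % 2 = 0) by omega),
      if_neg (show ¬ (i+1+1 = 0) by omega), if_neg (show ¬ (i+1 = 0) by omega)]
    have e4 : 2*i+2-1 = 2*i+1 := by omega
    have e5 : 2*i+3+1 = 2*i+4 := by omega
    have e6 : 2*i+1+1 = 2*i+2 := by omega
    simp only [e4, e5, e6]
    have h1 : f (2*i+2) ≤ f (2*i+1) := hf (by omega)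
    have h2 : g (2*i+2) ≤ g (2*i+1) := hg (by omega)
    have h3 : f (2*i+3) ≤ f (2*i+2) := hf (by omega)
    have h4 : g (2*i+3) ≤ g (2*i+2) := hg (by omega)
    have h5 : f (2*i+4) ≤ f (2*i+3) := hf (by omega)
    have h6 : g (2*i+4) ≤ g (2*i+3) := hg (by omega)
    have h7 := pf (i+1); have h8 := pg (i+1)
    have e7 : 2*i+2+1 = 2*i+3 := by omega
    simp only [e0, e1, e7] at h7 h8
    have hnorm : (2*i+2 = 0 ∨ f (2*i+2) + g (2*i+2) < f (2*i+1) + g (2*i+1)) ↔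
        (f (2*i+2) + g (2*i+2) < f (2*i+1) + g (2*i+1)) := by omega
    simp only [hnorm]
    split_ifs <;> omega

def Tt (f g : ℕ → ℕ) (j : ℕ) : ℤ :=
  (2*(j:ℤ)+1) * xi' f g j + ((f j + g j : ℤ) + xi' f g j) % 2
    - ((f j % 2 : ℕ) : ℤ) + ((g j % 2 : ℕ) : ℤ)

lemma Tpair (f g : ℕ → ℕ) (hf : Antitone f) (hg : Antitone g)
    (pf : ∀ i, f (2*i) % 2 = f (2*i+1) % 2) (pg : ∀ i, g (2*i) % 2 = g (2*i+1) % 2) (i : ℕ) :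
    Tt f g (2*i) + Tt f g (2*i+1) = GG2 f g (i+1) - GG2 f g i := by
  simp only [Tt]
  push_cast

  rcases i with _ | i
  · simp only [GG2, xi', U']
    norm_num
    have h1 : f 2 ≤ f 1 := hf (by omega)
    have h2 : g 2 ≤ g 1 := hg (by omega)
    have h3 := pf 0
    have h4 := pg 0
    norm_num at h3 h4
    split_ifs <;> push_cast <;> omega
  · simp only [GG2, xi', U']
    have e0 : 2*(i+1) = 2*i+2 := by ring
    have e1 : 2*(i+1)+1 = 2*i+3 := by ring
    have e2 : 2*(i+1+1) - 1 = 2*i+3 := by omega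
    have e3 : 2*(i+1) - 1 = 2*i+1 := by omega
    rw [e2, e3, e1, e0]
    rw [if_pos (show (2*i+2) % 2 = 0 by omega), if_neg (show ¬ ((2*i+3) % 2 = 0) by omega),
      if_neg (show ¬ (i+1+1 = 0) by omega), if_neg (show ¬ (i+1 = 0) by omega)]
    have e4 : 2*i+2-1 = 2*i+1 := by omega
    have e5 : 2*i+3+1 = 2*i+4 := by omega
    have e6 : 2*i+1+1 = 2*i+2 := by omega
    simp only [e4, e5, e6]
    have h1 : f (2*i+2) ≤ f (2*i+1) := hf (by omega)
    have h2 : g (2*i+2) ≤ g (2*i+1) := hg (by omega)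
    have h3 : f (2*i+3) ≤ f (2*i+2) := hf (by omega)
    have h4 : g (2*i+3) ≤ g (2*i+2) := hg (by omega)
    have h5 : f (2*i+4) ≤ f (2*i+3) := hf (by omega)
    have h6 : g (2*i+4) ≤ g (2*i+3) := hg (by omega)
    have h7 := pf (i+1); have h8 := pg (i+1)
    have e7 : 2*i+2+1 = 2*i+3 := by omega
    simp only [e0, e1, e7] at h7 h8
    have hnorm : (2*i+2 = 0 ∨ f (2*i+2) + g (2*i+2) < f (2*i+1) + g (2*i+1)) ↔
        (f (2*i+2) + g (2*i+2) < f (2*i+1) + g (2*i+1)) := by omega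
    simp only [hnorm]
    push_cast
    split_ifs <;> push_cast <;> omega



lemma sum_pair (h : ℕ → ℤ) (M : ℕ) :
    ∑ j ∈ Finset.range (2*M), h j = ∑ i ∈ Finset.range M, (h (2*i) + h (2*i+1)) := by
  induction M with
  | zero => simp
  | succ M ih =>
    rw [Finset.sum_range_succ, ← ih, show 2*(M+1) = 2*M+1+1 by ring,
      Finset.sum_range_succ, Finset.sum_range_succ]
    ring_nf

lemma sum_xi'_eq (f g : ℕ → ℕ) (hf : Antitone f) (hg : Antitone g)
    (pf : ∀ i, f (2*i) % 2 = f (2*i+1) % 2) (pg : ∀ i, g (2*i) % 2 = g (2*i+1) % 2)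
    (M : ℕ) (h0 : g (2*M-1) % 2 = 0) :
    ∑ j ∈ Finset.range (2*M), xi' f g j = 0 := by
  rw [sum_pair]
  rw [Finset.sum_congr rfl (fun i _ => xi'_pair f g hf hg pf pg i), Finset.sum_range_sub]
  simp only [GG, U']
  split_ifs <;> omega

lemma sum_Tt_eq (f g : ℕ → ℕ) (hf : Antitone f) (hg : Antitone g)
    (pf : ∀ i, f (2*i) % 2 = f (2*i+1) % 2) (pg : ∀ i, g (2*i) % 2 = g (2*i+1) % 2)
    (M : ℕ) (h0 : g (2*M-1) % 2 = 0) :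
    ∑ j ∈ Finset.range (2*M), Tt f g j = 0 := by
  rw [sum_pair]
  rw [Finset.sum_congr rfl (fun i _ => Tpair f g hf hg pf pg i), Finset.sum_range_sub]
  simp only [GG2, U']
  split_ifs <;> omega

lemma xi'_spec (f g : ℕ → ℕ) (j : ℕ) :
    xi' f g j = 0 ∨ ((f j % 2 = 0 ∧ g j % 2 = 1) ∧ (xi' f g j = 1 ∨ xi' f g j = -1)) := by
  unfold xi'
  split_ifs <;> tauto

lemma xi'_zero_of_fodd {f g : ℕ → ℕ} {j : ℕ} (h : ¬ (f j % 2 = 0 ∧ g j % 2 = 1)) :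
    xi' f g j = 0 := by
  unfold xi'
  split_ifs <;> tauto

lemma wald_nonneg (f g : ℕ → ℕ) (j : ℕ) : 0 ≤ (f j : ℤ) + g j + xi' f g j := by
  unfold xi'
  split_ifs <;> omega

lemma wald_step (f g : ℕ → ℕ) (hf : Antitone f) (hg : Antitone g) (j : ℕ) :
    (f (j+1) : ℤ) + g (j+1) + xi' f g (j+1) ≤ (f j : ℤ) + g j + xi' f g j := by
  have h1 : f (j+1) ≤ f j := hf (by omega)
  have h2 : g (j+1) ≤ g j := hg (by omega)
  have h3 : f (j+1+1) ≤ f (j+1) := hf (by omega)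
  have h4 : g (j+1+1) ≤ g (j+1) := hg (by omega)
  unfold xi'
  have e1 : j + 1 - 1 = j := by omega
  simp only [e1]
  have hnorm : (j+1 = 0 ∨ f (j+1) + g (j+1) < f j + g j) ↔ (f (j+1) + g (j+1) < f j + g j) := by
    omega
  simp only [hnorm]
  split_ifs <;> omega



lemma symp_w (f g : ℕ → ℕ) (hf : Antitone f) (hg : Antitone g)
    {Nf Ng : ℕ} (hNf : ∀ j, Nf ≤ j → f j = 0) (hNg : ∀ j, Ng ≤ j → g j = 0)
    (pf : ∀ i, f (2*i) % 2 = f (2*i+1) % 2) (pg : ∀ i, g (2*i) % 2 = g (2*i+1) % 2)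
    (hfsym : ∀ k, 0 < k → k % 2 = 1 → Even (pmult f k))
    (hgorth : ∀ k, 0 < k → k % 2 = 0 → Even (pmult g k))
    (w : ℕ → ℕ) (hw : ∀ j, (w j : ℤ) = (f j : ℤ) + g j + xi' f g j) :
    ∀ k, 0 < k → k % 2 = 1 → Even (pmult w k) := by
  intro k hk hko
  have hs : Antitone (fun j => f j + g j) := fun i j hij => Nat.add_le_add (hf hij) (hg hij)
  have hsN : ∀ j, Nf + Ng ≤ j → f j + g j = 0 := by
    intro j hj
    rw [hNf j (by omega), hNg j (by omega)]
  -- characterization of w j = k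
  have hchar : ∀ j, w j = k ↔ (f j + g j = k ∧ xi' f g j = 0) := by
    intro j
    have hwj := hw j
    constructor
    · intro hj
      rcases xi'_spec f g j with h0 | ⟨⟨hP1, hP2⟩, hpm⟩
      · rw [h0] at hwj ⊢
        constructor
        · omega
        · rfl
      · exfalso
        rcases hpm with h1 | h1 <;> rw [h1] at hwj <;> omega
    · rintro ⟨h1, h2⟩
      rw [h2] at hwj
      omega
  set α := ptrans (fun j => f j + g j) k with hα
  set β := ptrans (fun j => f j + g j) (k-1) with hβ
  have hrunIco : {j | f j + g j = k} = Set.Ico α β := run_eq_Ico hs hsN (by omega)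
  have hmem : ∀ j, f j + g j = k ↔ (α ≤ j ∧ j < β) := by
    intro j
    have : (f j + g j = k) ↔ j ∈ {j | f j + g j = k} := Iff.rfl
    rw [this, hrunIco, Set.mem_Ico]
  by_cases hrun : β ≤ α
  · -- empty run
    have hempty : {j | w j = k} = (∅ : Set ℕ) := by
      ext j
      simp only [Set.mem_setOf_eq, Set.mem_empty_iff_false, iff_false]
      intro hj
      have := (hmem j).mp ((hchar j).mp hj).1
      omega
    rw [pmult, show {j : ℕ // w j = k} = ↥{j | w j = k} from rfl, hempty]
    simp
  push_neg at hrun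
  have hαk : f α + g α = k := (hmem α).mpr ⟨le_rfl, hrun⟩
  have hconst : ∀ j, α ≤ j → j < β → f j = f α ∧ g j = g α := by
    intro j hj1 hj2
    induction j, hj1 using Nat.le_induction with
    | base => exact ⟨rfl, rfl⟩
    | succ j hj ih =>
      have hprev := ih (by omega)
      have hsj : f j + g j = k := (hmem j).mpr ⟨hj, by omega⟩
      have hsj1 : f (j+1) + g (j+1) = k := (hmem (j+1)).mpr ⟨by omega, hj2⟩
      have h1 : f (j+1) ≤ f j := hf (by omega)
      have h2 : g (j+1) ≤ g j := hg (by omega)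
      omega
  rcases (show (f α % 2 = 0 ∧ g α % 2 = 1) ∨ (f α % 2 = 1 ∧ g α % 2 = 0) by omega)
    with ⟨hc1, hc2⟩ | ⟨hc1, hc2⟩
  · -- Type P : f even, g odd on the run
    have hxiE : ∀ j, α ≤ j → j < β → j % 2 = 0 → xi' f g j = if j = α then 1 else 0 := by
      intro j hj1 hj2 hj0
      obtain ⟨hfj, hgj⟩ := hconst j hj1 hj2
      have hsj : f j + g j = k := (hmem j).mpr ⟨hj1, hj2⟩
      have hthird : (j = 0 ∨ f j + g j < f (j-1) + g (j-1)) ↔ j = α := by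
        constructor
        · rintro (h0 | hlt)
          · omega
          · have hj1' : f (j-1) + g (j-1) ≥ k + 1 := by omega
            have := (trans_iff hs hsN k (j-1)).mp hj1'
            omega
        · intro h
          by_cases h0 : j = 0
          · left; exact h0
          · right
            have : k + 1 ≤ f (j-1) + g (j-1) := (trans_iff hs hsN k (j-1)).mpr (by omega)
            omega
      rw [xi', if_pos hj0]
      by_cases hja : j = α
      · rw [if_pos (⟨by omega, by omega, hthird.mpr hja⟩), if_pos hja]
      · rw [if_neg (by rw [hthird]; tauto), if_neg hja]
    have hxiO : ∀ j, α ≤ j → j < β → j % 2 = 1 → xi' f g j = if j = β - 1 then -1 else 0 := by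
      intro j hj1 hj2 hj0
      obtain ⟨hfj, hgj⟩ := hconst j hj1 hj2
      have hsj : f j + g j = k := (hmem j).mpr ⟨hj1, hj2⟩
      have hthird : (f (j+1) + g (j+1) < f j + g j) ↔ j = β - 1 := by
        constructor
        · intro hlt
          have : ¬ (j + 1 < β) := by
            intro hc
            have := (hmem (j+1)).mpr ⟨by omega, hc⟩
            omega
          omega
        · intro h
          have hnm : ¬ ((k-1) + 1 ≤ f (j+1) + g (j+1)) := by
            intro hc
            have := (trans_iff hs hsN (k-1) (j+1)).mp hc
            omega
          omega
      rw [xi', if_neg (by omega)]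
      by_cases hjb : j = β - 1
      · rw [if_pos (⟨by omega, by omega, hthird.mpr hjb⟩), if_pos hjb]
      · rw [if_neg (by rw [hthird]; tauto), if_neg hjb]
    have hsetP : {j | w j = k} = Set.Ico (α + 1 - α % 2) (β + β % 2 - 1) := by
      ext j
      simp only [Set.mem_setOf_eq, Set.mem_Ico]
      rw [hchar j]
      constructor
      · rintro ⟨h1, h2⟩
        obtain ⟨hj1, hj2⟩ := (hmem j).mp h1
        rcases (show j % 2 = 0 ∨ j % 2 = 1 by omega) with hp | hp
        · have hv := hxiE j hj1 hj2 hp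
          have hja : j ≠ α := by
            intro hc
            rw [if_pos hc] at hv
            omega
          rw [if_neg hja] at hv
          omega
        · have hv := hxiO j hj1 hj2 hp
          have hjb : j ≠ β - 1 := by
            intro hc
            rw [if_pos hc] at hv
            omega
          rw [if_neg hjb] at hv
          omega
      · intro hj'
        have hj1 : α ≤ j := by omega
        have hj2 : j < β := by omega
        refine ⟨(hmem j).mpr ⟨hj1, hj2⟩, ?_⟩
        rcases (show j % 2 = 0 ∨ j % 2 = 1 by omega) with hp | hp
        · rw [hxiE j hj1 hj2 hp, if_neg (by omega)]
        · rw [hxiO j hj1 hj2 hp, if_neg (by omega)]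
    rw [pmult, show {j : ℕ // w j = k} = ↥{j | w j = k} from rfl, hsetP, card_setIco,
      Nat.even_iff]
    omega
  · -- Type B : f odd, g even on the run
    have hxi0 : ∀ j, α ≤ j → j < β → xi' f g j = 0 := by
      intro j hj1 hj2
      obtain ⟨hfj, hgj⟩ := hconst j hj1 hj2
      rw [xi']
      split_ifs <;> omega
    have hsetB : {j | w j = k} = Set.Ico α β := by
      ext j
      simp only [Set.mem_setOf_eq, Set.mem_Ico]
      rw [hchar j]
      constructor
      · rintro ⟨h1, _⟩
        exact (hmem j).mp h1
      · intro hj'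
        exact ⟨(hmem j).mpr hj', hxi0 j hj'.1 hj'.2⟩
    -- evenness of α
    have hEt1 : Even (ptrans f (f α)) :=
      lemB hf hNf pf 1 hfsym (ptrans f (f α)) (f α) rfl hc1 ⟨α, rfl⟩
    have hEt2 : Even (ptrans g (g α)) :=
      lemB hg hNg pg 0 hgorth (ptrans g (g α)) (g α) rfl hc2 ⟨α, rfl⟩
    have ht1le : ptrans f (f α) ≤ α := by
      by_contra hc
      have := (trans_iff hf hNf (f α) α).mpr (by omega)
      omega
    have ht2le : ptrans g (g α) ≤ α := by
      by_contra hc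
      have := (trans_iff hg hNg (g α) α).mpr (by omega)
      omega
    have hup : α ≤ ptrans f (f α) ∨ α ≤ ptrans g (g α) := by
      by_cases h0 : α = 0
      · left; omega
      · have hs1 : k + 1 ≤ f (α-1) + g (α-1) := (trans_iff hs hsN k (α-1)).mpr (by omega)
        have h1 : f α ≤ f (α-1) := hf (by omega)
        have h2 : g α ≤ g (α-1) := hg (by omega)
        rcases (show f α + 1 ≤ f (α-1) ∨ g α + 1 ≤ g (α-1) by omega) with h3 | h3
        · left
          have := (trans_iff hf hNf (f α) (α-1)).mp h3
          omega
        · right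
          have := (trans_iff hg hNg (g α) (α-1)).mp h3
          omega
    have hEα : Even α := by
      rcases hup with h | h
      · have : α = ptrans f (f α) := by omega
        rw [this]; exact hEt1
      · have : α = ptrans g (g α) := by omega
        rw [this]; exact hEt2
    -- evenness of β
    have hβm1 : f (β-1) = f α ∧ g (β-1) = g α := hconst (β-1) (by omega) (by omega)
    have hsβ : f β + g β ≤ k - 1 := by
      by_contra hc
      have := (trans_iff hs hsN (k-1) β).mp (by omega)
      omega
    have hfβ : f β ≤ f α := by
      have := hf (show β - 1 ≤ β by omega)
      omega
    have hgβ : g β ≤ g α := by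
      have := hg (show β - 1 ≤ β by omega)
      omega
    have hEβ : Even β := by
      by_cases hfb : f β < f α
      · -- β = ptrans f (f α - 1)
        have hb1 : β ≤ ptrans f (f α - 1) := by
          have : (f α - 1) + 1 ≤ f (β-1) := by omega
          have := (trans_iff hf hNf (f α - 1) (β-1)).mp this
          omega
        have hb2 : ptrans f (f α - 1) ≤ β := by
          by_contra hc
          have := (trans_iff hf hNf (f α - 1) β).mpr (by omega)
          omega
        have hmle : ptrans f (f α) ≤ ptrans f (f α - 1) := ptrans_mono hf hNf (by omega)
        have hpm := hfsym (f α) (by omega) hc1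
        rw [pmult_eq hf hNf (show 1 ≤ f α by omega)] at hpm
        rw [Nat.even_iff] at *
        omega
      · -- g β < g α, β = ptrans g (g α - 1)
        have hgb : g β < g α := by omega
        have hb1 : β ≤ ptrans g (g α - 1) := by
          have : (g α - 1) + 1 ≤ g (β-1) := by omega
          have := (trans_iff hg hNg (g α - 1) (β-1)).mp this
          omega
        have hb2 : ptrans g (g α - 1) ≤ β := by
          by_contra hc
          have := (trans_iff hg hNg (g α - 1) β).mpr (by omega)
          omega
        have hmle : ptrans g (g α) ≤ ptrans g (g α - 1) := ptrans_mono hg hNg (by omega)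
        have hpm := hgorth (g α) (by omega) hc2
        rw [pmult_eq hg hNg (show 1 ≤ g α by omega)] at hpm
        rw [Nat.even_iff] at *
        omega
    rw [pmult, show {j : ℕ // w j = k} = ↥{j | w j = k} from rfl, hsetB, card_setIco,
      Nat.even_iff]
    rw [Nat.even_iff] at hEα hEβ
    omega


end S4

/-- type C dimension.  `d₁ = 2a`, `d₂ = 2b`, `d = 2n = d₁+d₂`, `λ₁` special
symplectic of `d₁`, `λ₂` special orthogonal of `d₂`.  Then `W = W(λ₁,λ₂)` (ε₁=0, ε₂=1) is
a symplectic partition of `d` and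
`D_sp(W) = D_sp(λ₁) + D_o(λ₂) + n(2n+1) − a(2a+1) − b(2b−1)`. -/
theorem stmt4 (a b : ℕ) (lam1 lam2 : ℕ → ℕ)
    (h1 : IsPartitionOf lam1 (2*a)) (h1sp : IsSymplectic lam1)
    (h1s : IsSymplectic (ptrans lam1))
    (h2 : IsPartitionOf lam2 (2*b)) (h2o : IsOrthogonal lam2)
    (h2s : IsSymplectic (ptrans lam2)) :
    ∃ w : ℕ → ℕ, (∀ j, (w j : ℤ) = wald lam1 lam2 0 1 (2*a+2*b) j) ∧
      IsPartitionOf w (2*a+2*b) ∧ IsSymplectic w ∧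
      Dsymp w (a+b)
        = Dsymp lam1 a + Dorth lam2 (2*b)
          + (((a+b : ℕ) : ℚ) * (2 * ((a+b : ℕ) : ℚ) + 1)
             - (a : ℚ) * (2 * (a : ℚ) + 1)
             - (b : ℚ) * (2 * (b : ℚ) - 1)) := by
  obtain ⟨hf, N1, hN1, hsum1⟩ := h1
  obtain ⟨hg, N2, hN2, hsum2⟩ := h2
  have pf : ∀ i, lam1 (2*i) % 2 = lam1 (2*i+1) % 2 := S4.pairparity hf hN1 h1s
  have pg : ∀ i, lam2 (2*i) % 2 = lam2 (2*i+1) % 2 := S4.pairparity hg hN2 h2s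
  have hxieq : ∀ j, xiSeq lam1 lam2 0 1 (2*a+2*b) j = S4.xi' lam1 lam2 j :=
    S4.xiSeq_eq_xi' lam1 lam2 _ (by omega)
  set w : ℕ → ℕ := fun j => ((lam1 j : ℤ) + lam2 j + S4.xi' lam1 lam2 j).toNat with hwdef
  have hw : ∀ j, (w j : ℤ) = (lam1 j : ℤ) + lam2 j + S4.xi' lam1 lam2 j := fun j =>
    Int.toNat_of_nonneg (S4.wald_nonneg lam1 lam2 j)
  set M : ℕ := N1 + N2 + 1 with hM
  have hwanti : Antitone w := by
    apply antitone_nat_of_succ_le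
    intro j
    have hstep := S4.wald_step lam1 lam2 hf hg j
    have e1 := hw j
    have e2 := hw (j+1)
    omega
  have hwsupp : ∀ j, 2*M ≤ j → w j = 0 := by
    intro j hj
    have hz1 : lam1 j = 0 := hN1 j (by omega)
    have hz2 : lam2 j = 0 := hN2 j (by omega)
    have hxi : S4.xi' lam1 lam2 j = 0 := S4.xi'_zero_of_fodd (by omega)
    have := hw j
    omega
  have hsxi : ∑ j ∈ Finset.range (2*M), S4.xi' lam1 lam2 j = 0 :=
    S4.sum_xi'_eq lam1 lam2 hf hg pf pg M (by rw [hN2 (2*M-1) (by omega)])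
  have hext1 : ∑ j ∈ Finset.range (2*M), lam1 j = 2*a := by
    rw [← hsum1]
    exact (Finset.sum_subset (Finset.range_subset_range.mpr (by omega))
      (fun x _ hx => hN1 x (by simpa using hx))).symm
  have hext2 : ∑ j ∈ Finset.range (2*M), lam2 j = 2*b := by
    rw [← hsum2]
    exact (Finset.sum_subset (Finset.range_subset_range.mpr (by omega))
      (fun x _ hx => hN2 x (by simpa using hx))).symm
  have hsumw : ∑ j ∈ Finset.range (2*M), w j = 2*a + 2*b := by
    have hz : (↑(∑ j ∈ Finset.range (2*M), w j) : ℤ) = 2*a + 2*b := by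
      push_cast
      rw [Finset.sum_congr rfl (fun j (_ : j ∈ Finset.range (2*M)) => hw j),
        Finset.sum_add_distrib, Finset.sum_add_distrib, hsxi]
      have c1 : ∑ j ∈ Finset.range (2*M), (lam1 j : ℤ) = ((2*a : ℕ) : ℤ) := by
        rw [← hext1]; push_cast; rfl
      have c2 : ∑ j ∈ Finset.range (2*M), (lam2 j : ℤ) = ((2*b : ℕ) : ℤ) := by
        rw [← hext2]; push_cast; rfl
      rw [c1, c2]
      push_cast
      ring
    exact_mod_cast hz
  refine ⟨w, ?_, ⟨hwanti, 2*M, hwsupp, hsumw⟩, ?_, ?_⟩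
  · intro j
    rw [hw j, wald, hxieq j]
  · intro k hk hodd
    exact S4.symp_w lam1 lam2 hf hg hN1 hN2 pf pg
      (fun k' hk' h2' => h1sp k' hk' (Nat.odd_iff.mpr h2'))
      (fun k' hk' h2' => h2o k' hk' (Nat.even_iff.mpr h2'))
      w hw k hk (Nat.odd_iff.mp hodd)
  · -- dimension formula
    have hTsum : ∑ j ∈ Finset.range (2*M), S4.Tt lam1 lam2 j = 0 :=
      S4.sum_Tt_eq lam1 lam2 hf hg pf pg M (by rw [hN2 (2*M-1) (by omega)])
    have E : ∀ j : ℕ, ((2*(j:ℤ)+1) * (w j : ℤ)) + ((w j % 2 : ℕ) : ℤ) + ((lam2 j % 2 : ℕ) : ℤ)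
        = (2*(j:ℤ)+1) * ((lam1 j : ℤ) + (lam2 j : ℤ)) + ((lam1 j % 2 : ℕ) : ℤ)
          + S4.Tt lam1 lam2 j := by
      intro j
      have e := hw j
      have em : ((w j % 2 : ℕ) : ℤ) = ((lam1 j : ℤ) + lam2 j + S4.xi' lam1 lam2 j) % 2 := by
        rw [← e]
        push_cast
        ring
      rw [S4.Tt, em]
      linear_combination (2*(j:ℤ)+1) * e
    have hsums := Finset.sum_congr rfl (fun j (_ : j ∈ Finset.range (2*M)) => E j)
    simp only [Finset.sum_add_distrib] at hsums
    rw [hTsum] at hsums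
    have cSw : ∑ j ∈ Finset.range (2*M), (2*(j:ℤ)+1) * (w j : ℤ) = (sumSqTrans w : ℤ) := by
      rw [S4.sumSqTrans_eq hwanti hwsupp]
      push_cast
      rfl
    have cS1 : ∑ j ∈ Finset.range (2*M), (2*(j:ℤ)+1) * (lam1 j : ℤ) = (sumSqTrans lam1 : ℤ) := by
      rw [S4.sumSqTrans_eq hf (N := 2*M) (fun j hj => hN1 j (by omega))]
      push_cast
      rfl
    have cS2 : ∑ j ∈ Finset.range (2*M), (2*(j:ℤ)+1) * (lam2 j : ℤ) = (sumSqTrans lam2 : ℤ) := by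
      rw [S4.sumSqTrans_eq hg (N := 2*M) (fun j hj => hN2 j (by omega))]
      push_cast
      rfl
    have cOw : ∑ j ∈ Finset.range (2*M), ((w j % 2 : ℕ) : ℤ) = (oddCount w : ℤ) := by
      rw [S4.oddCount_eq hwsupp]
      push_cast
      rfl
    have cO1 : ∑ j ∈ Finset.range (2*M), ((lam1 j % 2 : ℕ) : ℤ) = (oddCount lam1 : ℤ) := by
      rw [S4.oddCount_eq (N := 2*M) (fun j hj => hN1 j (by omega))]
      push_cast
      rfl
    have cO2 : ∑ j ∈ Finset.range (2*M), ((lam2 j % 2 : ℕ) : ℤ) = (oddCount lam2 : ℤ) := by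
      rw [S4.oddCount_eq (N := 2*M) (fun j hj => hN2 j (by omega))]
      push_cast
      rfl
    have hsplit : ∑ j ∈ Finset.range (2*M), (2*(j:ℤ)+1) * ((lam1 j : ℤ) + (lam2 j : ℤ))
        = ∑ j ∈ Finset.range (2*M), (2*(j:ℤ)+1) * (lam1 j : ℤ)
          + ∑ j ∈ Finset.range (2*M), (2*(j:ℤ)+1) * (lam2 j : ℤ) := by
      rw [← Finset.sum_add_distrib]
      exact Finset.sum_congr rfl (fun j _ => by ring)
    rw [cSw, cOw, cO2, hsplit, cS1, cS2, cO1] at hsums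
    have keyQ : (sumSqTrans w : ℚ) + (oddCount w : ℚ) + (oddCount lam2 : ℚ)
        = (sumSqTrans lam1 : ℚ) + (sumSqTrans lam2 : ℚ) + (oddCount lam1 : ℚ) := by
      exact_mod_cast congrArg (fun z : ℤ => (z : ℚ)) hsums
    simp only [Dsymp, Dorth]
    push_cast
    push_cast at keyQ
    linear_combination (-1/2 : ℚ) * keyQ
end

section
/- Let d_1, d_2 be odd numbers and d = d_1+d_2−1. Let λ_1, λ_1' be special orthogonal partitions of d_1 and λ_2, λ_2' special orthogonal partitions of d_2, and suppose λ_1 ≤ λ_1' and λ_2 ≤ λ_2' in dominance order. Then W(λ_1,λ_2) ≤ W(λ_1',λ_2') in dominance order, where both Waldspurger sequences are formed with the type B data. -/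
lemma wald_downset (T : Finset ℕ) (hT : ∀ i j, i ≤ j → j ∈ T → i ∈ T) (i : ℕ) :
    i ∈ T ↔ i < T.card := by
  constructor
  · intro hi
    have hsub : Finset.range (i+1) ⊆ T := fun x hx =>
      hT x i (by simpa using Nat.lt_succ_iff.mp (Finset.mem_range.mp hx)) hi
    have := Finset.card_le_card hsub
    simpa using this
  · intro hi
    by_contra h
    have hsub : T ⊆ Finset.range i := by
      intro x hx
      rw [Finset.mem_range]
      by_contra hxi
      exact h (hT i x (Nat.le_of_not_lt hxi) hx)
    have := Finset.card_le_card hsub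
    simp at this
    omega

lemma wald_ptrans_iff (f : ℕ → ℕ) (hf : Antitone f) (N : ℕ) (hN : ∀ j, N ≤ j → f j = 0)
    (k i : ℕ) : k + 1 ≤ f i ↔ i < ptrans f k := by
  classical
  set T : Finset ℕ := (Finset.range N).filter (fun i => k + 1 ≤ f i) with hT
  have hmem : ∀ i, i ∈ T ↔ k + 1 ≤ f i := by
    intro i
    simp only [hT, Finset.mem_filter, Finset.mem_range]
    constructor
    · exact fun h => h.2
    · intro h
      refine ⟨?_, h⟩
      by_contra hi
      have := hN i (Nat.le_of_not_lt hi)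
      omega
  have hset : {j : ℕ | k + 1 ≤ f j} = ↑T := by
    ext j; simp [hmem]
  have hcard : ptrans f k = T.card := by
    show Nat.card {j : ℕ // k + 1 ≤ f j} = T.card
    have : Nat.card {j : ℕ // k + 1 ≤ f j} = ({j : ℕ | k + 1 ≤ f j} : Set ℕ).ncard :=
      Nat.card_coe_set_eq _
    rw [this, hset, Set.ncard_coe_finset]
  have hdown : ∀ i j, i ≤ j → j ∈ T → i ∈ T := by
    intro i j hij hj
    rw [hmem] at hj ⊢
    exact le_trans hj (hf hij)
  rw [hcard, ← wald_downset T hdown i, hmem]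

lemma wald_pmult_ptrans (f : ℕ → ℕ) (hf : Antitone f) (N : ℕ) (hN : ∀ j, N ≤ j → f j = 0)
    (k : ℕ) (hk : 0 < k) : pmult (ptrans f) k = f (k-1) - f k := by
  have hset : {j : ℕ | ptrans f j = k} = ↑(Finset.Ico (f k) (f (k-1))) := by
    ext j
    simp only [Set.mem_setOf_eq, Finset.coe_Ico, Set.mem_Ico]
    constructor
    · intro h
      constructor
      · by_contra hj
        have : j + 1 ≤ f k := by omega
        rw [wald_ptrans_iff f hf N hN j k] at this
        omega
      · have : k - 1 < ptrans f j := by omega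
        rw [← wald_ptrans_iff f hf N hN j (k-1)] at this
        omega
    · intro ⟨h1, h2⟩
      have ha : k - 1 < ptrans f j := by
        rw [← wald_ptrans_iff f hf N hN j (k-1)]; omega
      have hb : ¬ (k < ptrans f j) := by
        rw [← wald_ptrans_iff f hf N hN j k]; omega
      omega
  show Nat.card {j : ℕ // ptrans f j = k} = f (k-1) - f k
  have : Nat.card {j : ℕ // ptrans f j = k} = ({j : ℕ | ptrans f j = k} : Set ℕ).ncard :=
    Nat.card_coe_set_eq _
  rw [this, hset, Set.ncard_coe_finset, Nat.card_Ico]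

/-- pairing: parts pair up in parity at (1-based) even/odd boundary. 0-based: odd j. -/
lemma wald_pairing (f : ℕ → ℕ) (d : ℕ) (hp : IsPartitionOf f d)
    (hs : IsOrthogonal (ptrans f)) : ∀ j, j % 2 = 1 → f j % 2 = f (j+1) % 2 := by
  obtain ⟨hf, N, hN, -⟩ := hp
  intro j hj
  have hk : 0 < j + 1 := Nat.succ_pos j
  have he : Even (j+1) := Nat.even_iff.mpr (by omega)
  have := hs (j+1) hk he
  rw [wald_pmult_ptrans f hf N hN (j+1) hk] at this
  simp only [Nat.add_sub_cancel] at this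
  have hle : f (j+1) ≤ f j := hf (Nat.le_succ j)
  rw [Nat.even_sub hle, Nat.even_iff, Nat.even_iff] at this
  omega

/-- parity of odd-length partial sums of a parity-paired sequence -/
lemma wald_qparity_odd (f : ℕ → ℕ) (hfp : ∀ j, j % 2 = 1 → f j % 2 = f (j+1) % 2) :
    ∀ n, (∑ j ∈ Finset.range (2*n+1), f j) % 2 = f 0 % 2 := by
  intro n
  induction n with
  | zero => simp
  | succ m ih =>
    have h1 : 2*(m+1)+1 = (2*m+1) + 1 + 1 := by ring
    rw [h1, Finset.sum_range_succ, Finset.sum_range_succ]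
    have hp := hfp (2*m+1) (by omega)
    have e1 : f (2*m+1+1) = f (2*m+2) := by norm_num
    have e2 : f (2*m+1+1+1) = f (2*m+3) := by norm_num
    omega

lemma wald_qparity_even (f : ℕ → ℕ) (hfp : ∀ j, j % 2 = 1 → f j % 2 = f (j+1) % 2) (n : ℕ) :
    (∑ j ∈ Finset.range (2*n+2), f j) % 2 = (f 0 + f (2*n+1)) % 2 := by
  have h1 : 2*n+2 = (2*n+1) + 1 := by ring
  rw [h1, Finset.sum_range_succ]
  have := wald_qparity_odd f hfp n
  omega

lemma wald_f0_odd (f : ℕ → ℕ) (d : ℕ) (hp : IsPartitionOf f d) (hd : d % 2 = 1)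
    (hfp : ∀ j, j % 2 = 1 → f j % 2 = f (j+1) % 2) : f 0 % 2 = 1 := by
  obtain ⟨hf, N, hN, hsum⟩ := hp
  have hext : ∑ j ∈ Finset.range (2*N+1), f j = d := by
    rw [← hsum]
    symm
    apply Finset.sum_subset (Finset.range_subset_range.mpr (by omega))
    intro x _ hx
    exact hN x (by simpa using Nat.le_of_not_lt (fun h => hx (Finset.mem_range.mpr h)))
  have := wald_qparity_odd f hfp N
  omega

def wZb (f g : ℕ → ℕ) (n : ℕ) : Prop :=
  f n % 2 = 1 ∧ g n % 2 = 1 ∧ (n % 2 = 1 ∨ f n + g n = f (n+1) + g (n+1))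

open Classical in
noncomputable def wTz (f g : ℕ → ℕ) : ℕ → ℤ :=
  fun N => if N = 0 then 0 else if wZb f g (N-1) then 0 else -1

open Classical in
lemma wTz_succ (f g : ℕ → ℕ) (M : ℕ) :
    wTz f g (M+1) = if wZb f g M then 0 else -1 := by
  unfold wTz
  rw [if_neg (Nat.succ_ne_zero M), Nat.add_sub_cancel]

lemma wald_xi_step (f g : ℕ → ℕ) (hf : Antitone f) (hg : Antitone g)
    (hf0 : f 0 % 2 = 1) (hg0 : g 0 % 2 = 1)
    (hfp : ∀ j, j % 2 = 1 → f j % 2 = f (j+1) % 2)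
    (hgp : ∀ j, j % 2 = 1 → g j % 2 = g (j+1) % 2)
    (d : ℕ) (hd : d % 2 = 1) (N : ℕ) :
    wTz f g N + xiSeq f g 1 1 d N = wTz f g (N+1) := by
  classical
  rcases N with _ | M
  · -- N = 0
    have hle : f (0+1) + g (0+1) ≤ f 0 + g 0 :=
      add_le_add (hf (by omega)) (hg (by omega))
    rw [show wTz f g 0 = 0 from rfl, wTz_succ]
    by_cases hlt : f (0+1) + g (0+1) < f 0 + g 0
    · have hx : xiSeq f g 1 1 d 0 = -1 := by
        simp only [xiSeq]
        rw [if_neg (by rintro ⟨h1, -⟩; omega), if_pos ⟨by omega, hf0, hg0, hlt⟩]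
      have hz : ¬ wZb f g 0 := by
        rintro ⟨-, -, h3 | h3⟩
        · omega
        · omega
      rw [hx, if_neg hz]
      norm_num
    · have hx : xiSeq f g 1 1 d 0 = 0 := by
        simp only [xiSeq]
        rw [if_neg (by rintro ⟨h1, -⟩; omega), if_neg (by rintro ⟨-, -, -, h4⟩; exact hlt h4)]
      have hz : wZb f g 0 := ⟨hf0, hg0, Or.inr (by omega)⟩
      rw [hx, if_pos hz]
      norm_num
  · rw [wTz_succ, wTz_succ]
    have hle1 : f (M+1) ≤ f M := hf (Nat.le_succ M)
    have hle2 : g (M+1) ≤ g M := hg (Nat.le_succ M)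
    rcases Nat.even_or_odd M with hM | hM
    · -- M even, so 1-based index M+2 is even: possible +1
      have hM2 : M % 2 = 0 := Nat.even_iff.mp hM
      by_cases ho : f (M+1) % 2 = 1 ∧ g (M+1) % 2 = 1
      · by_cases hlt : f (M+1) + g (M+1) < f M + g M
        · have hx : xiSeq f g 1 1 d (M+1) = 1 := by
            simp only [xiSeq]
            rw [if_pos ⟨by omega, ho.1, ho.2, Or.inr (by simpa using hlt)⟩]
          have hzM : ¬ wZb f g M := by rintro ⟨-, -, h3 | h3⟩ <;> omega
          have hzM1 : wZb f g (M+1) := ⟨ho.1, ho.2, Or.inl (by omega)⟩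
          rw [hx, if_neg hzM, if_pos hzM1]
          norm_num
        · have hfe : f M = f (M+1) := by omega
          have hge : g M = g (M+1) := by omega
          have hx : xiSeq f g 1 1 d (M+1) = 0 := by
            simp only [xiSeq]
            rw [if_neg (by
                  rintro ⟨-, -, -, h4 | h4⟩
                  · omega
                  · simp only [Nat.add_sub_cancel] at h4; omega),
                if_neg (by rintro ⟨h1, -⟩; omega)]
          have hzM : wZb f g M := ⟨by omega, by omega, Or.inr (by omega)⟩
          have hzM1 : wZb f g (M+1) := ⟨ho.1, ho.2, Or.inl (by omega)⟩
          rw [hx, if_pos hzM, if_pos hzM1]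
          norm_num
      · have hx : xiSeq f g 1 1 d (M+1) = 0 := by
          simp only [xiSeq]
          rw [if_neg (by rintro ⟨-, h2, h3, -⟩; exact ho ⟨h2, h3⟩),
              if_neg (by rintro ⟨-, h2, h3, -⟩; exact ho ⟨h2, h3⟩)]
        have hzM1 : ¬ wZb f g (M+1) := by rintro ⟨a, b, -⟩; exact ho ⟨a, b⟩
        have hzM : ¬ wZb f g M := by
          rintro ⟨a, b, h3 | h3⟩
          · omega
          · exact ho ⟨by omega, by omega⟩
        rw [hx, if_neg hzM, if_neg hzM1]
        norm_num
    · -- M odd, 1-based index M+2 is odd: possible -1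
      have hM2 : M % 2 = 1 := Nat.odd_iff.mp hM
      have hpf := hfp M hM2
      have hpg := hgp M hM2
      have hle3 : f (M+1+1) + g (M+1+1) ≤ f (M+1) + g (M+1) :=
        add_le_add (hf (Nat.le_succ _)) (hg (Nat.le_succ _))
      by_cases ho : f (M+1) % 2 = 1 ∧ g (M+1) % 2 = 1
      · have hzM : wZb f g M := ⟨by omega, by omega, Or.inl hM2⟩
        by_cases hlt : f (M+1+1) + g (M+1+1) < f (M+1) + g (M+1)
        · have hx : xiSeq f g 1 1 d (M+1) = -1 := by
            simp only [xiSeq]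
            rw [if_neg (by rintro ⟨h1, -⟩; omega), if_pos ⟨by omega, ho.1, ho.2, hlt⟩]
          have hzM1 : ¬ wZb f g (M+1) := by rintro ⟨-, -, h3 | h3⟩ <;> omega
          rw [hx, if_pos hzM, if_neg hzM1]
          norm_num
        · have hx : xiSeq f g 1 1 d (M+1) = 0 := by
            simp only [xiSeq]
            rw [if_neg (by rintro ⟨h1, -⟩; omega), if_neg (by rintro ⟨-, -, -, h4⟩; exact hlt h4)]
          have hzM1 : wZb f g (M+1) := ⟨ho.1, ho.2, Or.inr (by omega)⟩
          rw [hx, if_pos hzM, if_pos hzM1]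
          norm_num
      · have hx : xiSeq f g 1 1 d (M+1) = 0 := by
          simp only [xiSeq]
          rw [if_neg (by rintro ⟨-, h2, h3, -⟩; exact ho ⟨h2, h3⟩),
              if_neg (by rintro ⟨-, h2, h3, -⟩; exact ho ⟨h2, h3⟩)]
        have hzM : ¬ wZb f g M := by rintro ⟨a, b, -⟩; exact ho ⟨by omega, by omega⟩
        have hzM1 : ¬ wZb f g (M+1) := by rintro ⟨a, b, -⟩; exact ho ⟨a, b⟩
        rw [hx, if_neg hzM, if_neg hzM1]
        norm_num

lemma wald_xi_sum (f g : ℕ → ℕ) (hf : Antitone f) (hg : Antitone g)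
    (hf0 : f 0 % 2 = 1) (hg0 : g 0 % 2 = 1)
    (hfp : ∀ j, j % 2 = 1 → f j % 2 = f (j+1) % 2)
    (hgp : ∀ j, j % 2 = 1 → g j % 2 = g (j+1) % 2)
    (d : ℕ) (hd : d % 2 = 1) (N : ℕ) :
    ∑ j ∈ Finset.range N, xiSeq f g 1 1 d j = wTz f g N := by
  induction N with
  | zero => simp [wTz]
  | succ M ih =>
    rw [Finset.sum_range_succ, ih, wald_xi_step f g hf hg hf0 hg0 hfp hgp d hd M]

lemma wald_zb_mono (f g f' g' : ℕ → ℕ) (hf : Antitone f) (hg : Antitone g)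
    (hf' : Antitone f') (hg' : Antitone g')
    (hf0 : f 0 % 2 = 1) (hg0 : g 0 % 2 = 1) (hf0' : f' 0 % 2 = 1) (hg0' : g' 0 % 2 = 1)
    (hfp : ∀ j, j % 2 = 1 → f j % 2 = f (j+1) % 2)
    (hgp : ∀ j, j % 2 = 1 → g j % 2 = g (j+1) % 2)
    (hfp' : ∀ j, j % 2 = 1 → f' j % 2 = f' (j+1) % 2)
    (hgp' : ∀ j, j % 2 = 1 → g' j % 2 = g' (j+1) % 2)
    (hd1 : NDomLE f f') (hd2 : NDomLE g g') (M : ℕ)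
    (heq : ∑ j ∈ Finset.range (M+1), f j + ∑ j ∈ Finset.range (M+1), g j
         = ∑ j ∈ Finset.range (M+1), f' j + ∑ j ∈ Finset.range (M+1), g' j)
    (hz : wZb f g M) : wZb f' g' M := by
  have ef : ∑ j ∈ Finset.range (M+1), f j = ∑ j ∈ Finset.range (M+1), f' j := by
    have := hd1 (M+1); have := hd2 (M+1); omega
  have eg : ∑ j ∈ Finset.range (M+1), g j = ∑ j ∈ Finset.range (M+1), g' j := by
    have := hd1 (M+1); have := hd2 (M+1); omega
  obtain ⟨hz1, hz2, hz3⟩ := hz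
  rcases Nat.even_or_odd M with hM | hM
  · -- M even: use exchange at neighbours
    have hM2 : M % 2 = 0 := Nat.even_iff.mp hM
    have heq2 : f M + g M = f (M+1) + g (M+1) := by
      rcases hz3 with h | h
      · omega
      · exact h
    have haf0 : f (M+1) ≤ f M := hf (by omega)
    have hag0 : g (M+1) ≤ g M := hg (by omega)
    have hfe : f M = f (M+1) := by omega
    have hge : g M = g (M+1) := by omega
    have hsf : ∑ j ∈ Finset.range (M+1), f j = (∑ j ∈ Finset.range M, f j) + f M :=
      Finset.sum_range_succ f M
    have hsf' : ∑ j ∈ Finset.range (M+1), f' j = (∑ j ∈ Finset.range M, f' j) + f' M :=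
      Finset.sum_range_succ f' M
    have hsg : ∑ j ∈ Finset.range (M+1), g j = (∑ j ∈ Finset.range M, g j) + g M :=
      Finset.sum_range_succ g M
    have hsg' : ∑ j ∈ Finset.range (M+1), g' j = (∑ j ∈ Finset.range M, g' j) + g' M :=
      Finset.sum_range_succ g' M
    have hfM : f' M ≤ f M := by have := hd1 M; omega
    have hgM : g' M ≤ g M := by have := hd2 M; omega
    have hsf2 : ∑ j ∈ Finset.range (M+2), f j = (∑ j ∈ Finset.range (M+1), f j) + f (M+1) :=
      Finset.sum_range_succ f (M+1)
    have hsf2' : ∑ j ∈ Finset.range (M+2), f' j = (∑ j ∈ Finset.range (M+1), f' j) + f' (M+1) :=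
      Finset.sum_range_succ f' (M+1)
    have hsg2 : ∑ j ∈ Finset.range (M+2), g j = (∑ j ∈ Finset.range (M+1), g j) + g (M+1) :=
      Finset.sum_range_succ g (M+1)
    have hsg2' : ∑ j ∈ Finset.range (M+2), g' j = (∑ j ∈ Finset.range (M+1), g' j) + g' (M+1) :=
      Finset.sum_range_succ g' (M+1)
    have hfM1 : f (M+1) ≤ f' (M+1) := by have := hd1 (M+2); omega
    have hgM1 : g (M+1) ≤ g' (M+1) := by have := hd2 (M+2); omega
    have haf : f' (M+1) ≤ f' M := hf' (by omega)
    have hag : g' (M+1) ≤ g' M := hg' (by omega)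
    have e1 : f' M = f M := by omega
    have e2 : g' M = g M := by omega
    have e3 : f' (M+1) = f' M := by omega
    have e4 : g' (M+1) = g' M := by omega
    exact ⟨by omega, by omega, Or.inr (by omega)⟩
  · -- M odd: use parity of even-length partial sums
    have hM2 : M % 2 = 1 := Nat.odd_iff.mp hM
    obtain ⟨n, hn⟩ := hM
    have hn2 : M + 1 = 2*n + 2 := by omega
    have pf := wald_qparity_even f hfp n
    have pf' := wald_qparity_even f' hfp' n
    have pg := wald_qparity_even g hgp n
    have pg' := wald_qparity_even g' hgp' n
    rw [show 2*n+1 = M by omega] at pf pf' pg pg'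
    rw [hn2] at ef eg
    exact ⟨by omega, by omega, Or.inl hM2⟩

/-- type B monotonicity.  `d₁, d₂` odd, `d = d₁+d₂−1`; `λ₁ ≤ λ₁'` and
`λ₂ ≤ λ₂'` special orthogonal partitions imply `W(λ₁,λ₂) ≤ W(λ₁',λ₂')` (ε₁=ε₂=1). -/
theorem stmt6 (d1 d2 : ℕ) (hd1 : Odd d1) (hd2 : Odd d2)
    (lam1 lam1' lam2 lam2' : ℕ → ℕ)
    (h1 : IsPartitionOf lam1 d1) (h1o : IsOrthogonal lam1)
    (h1s : IsOrthogonal (ptrans lam1))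
    (h1' : IsPartitionOf lam1' d1) (h1o' : IsOrthogonal lam1')
    (h1s' : IsOrthogonal (ptrans lam1'))
    (h2 : IsPartitionOf lam2 d2) (h2o : IsOrthogonal lam2)
    (h2s : IsOrthogonal (ptrans lam2))
    (h2' : IsPartitionOf lam2' d2) (h2o' : IsOrthogonal lam2')
    (h2s' : IsOrthogonal (ptrans lam2'))
    (hle1 : NDomLE lam1 lam1') (hle2 : NDomLE lam2 lam2') :
    DomLE (wald lam1 lam2 1 1 (d1+d2-1)) (wald lam1' lam2' 1 1 (d1+d2-1)) := by
  classical
  have hd : (d1 + d2 - 1) % 2 = 1 := by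
    obtain ⟨a, ha⟩ := hd1; obtain ⟨b, hb⟩ := hd2; omega
  have hp1 := wald_pairing lam1 d1 h1 h1s
  have hp1' := wald_pairing lam1' d1 h1' h1s'
  have hp2 := wald_pairing lam2 d2 h2 h2s
  have hp2' := wald_pairing lam2' d2 h2' h2s'
  have h01 : lam1 0 % 2 = 1 := wald_f0_odd lam1 d1 h1 (Nat.odd_iff.mp hd1) hp1
  have h01' : lam1' 0 % 2 = 1 := wald_f0_odd lam1' d1 h1' (Nat.odd_iff.mp hd1) hp1'
  have h02 : lam2 0 % 2 = 1 := wald_f0_odd lam2 d2 h2 (Nat.odd_iff.mp hd2) hp2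
  have h02' : lam2' 0 % 2 = 1 := wald_f0_odd lam2' d2 h2' (Nat.odd_iff.mp hd2) hp2'
  intro N
  have hsplit : ∀ (f g : ℕ → ℕ),
      ∑ j ∈ Finset.range N, wald f g 1 1 (d1+d2-1) j
        = ((∑ j ∈ Finset.range N, f j : ℕ) : ℤ) + ((∑ j ∈ Finset.range N, g j : ℕ) : ℤ)
          + ∑ j ∈ Finset.range N, xiSeq f g 1 1 (d1+d2-1) j := by
    intro f g
    simp only [wald]
    rw [Finset.sum_add_distrib, Finset.sum_add_distrib]
    push_cast
    ring
  rw [hsplit, hsplit,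
      wald_xi_sum lam1 lam2 h1.1 h2.1 h01 h02 hp1 hp2 _ hd N,
      wald_xi_sum lam1' lam2' h1'.1 h2'.1 h01' h02' hp1' hp2' _ hd N]
  rcases N with _ | M
  · simp [wTz]
  · have hA : (∑ j ∈ Finset.range (M+1), lam1 j) + (∑ j ∈ Finset.range (M+1), lam2 j)
        ≤ (∑ j ∈ Finset.range (M+1), lam1' j) + (∑ j ∈ Finset.range (M+1), lam2' j) :=
      add_le_add (hle1 _) (hle2 _)
    rw [wTz_succ, wTz_succ]
    by_cases hz : wZb lam1 lam2 M
    · rw [if_pos hz]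
      by_cases heq : (∑ j ∈ Finset.range (M+1), lam1 j) + (∑ j ∈ Finset.range (M+1), lam2 j)
          = (∑ j ∈ Finset.range (M+1), lam1' j) + (∑ j ∈ Finset.range (M+1), lam2' j)
      · have hz' := wald_zb_mono lam1 lam2 lam1' lam2' h1.1 h2.1 h1'.1 h2'.1
          h01 h02 h01' h02' hp1 hp2 hp1' hp2' hle1 hle2 M heq hz
        rw [if_pos hz']
        omega
      · by_cases hz' : wZb lam1' lam2' M
        · rw [if_pos hz']; omega
        · rw [if_neg hz']; omega
    · rw [if_neg hz]
      by_cases hz' : wZb lam1' lam2' M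
      · rw [if_pos hz']; omega
      · rw [if_neg hz']; omega
end

section
/- Let d_1, d_2 be even numbers and d = d_1+d_2. Let λ_1, λ_1' be special symplectic partitions of d_1 and λ_2, λ_2' special orthogonal partitions of d_2, and suppose λ_1 ≤ λ_1' and λ_2 ≤ λ_2' in dominance order. Then W(λ_1,λ_2) ≤ W(λ_1',λ_2') in dominance order, where both Waldspurger sequences are formed with the type C data. -/
section WaldAux

lemma ws_mem_iff_lt_ncard {s : Set ℕ} (hfin : s.Finite)
    (hdc : ∀ m n, m ≤ n → n ∈ s → m ∈ s) (m : ℕ) : m ∈ s ↔ m < s.ncard := by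
  constructor
  · intro hm
    have hsub : Set.Iic m ⊆ s := fun x hx => hdc x m hx hm
    have h := Set.ncard_le_ncard hsub hfin
    rw [← Finset.coe_Iic, Set.ncard_coe_finset, Nat.card_Iic] at h
    omega
  · intro hm
    by_contra hns
    have hsub : s ⊆ Set.Iio m := by
      intro x hx
      simp only [Set.mem_Iio]
      by_contra hxm
      push_neg at hxm
      exact hns (hdc m x hxm hx)
    have h := Set.ncard_le_ncard hsub (Set.finite_Iio m)
    rw [← Finset.coe_Iio, Set.ncard_coe_finset, Nat.card_Iio] at h
    omega

lemma ws_lt_ptrans_iff {f : ℕ → ℕ} (hf : Antitone f) {Nf : ℕ} (h0 : ∀ j, Nf ≤ j → f j = 0)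
    (i m : ℕ) : m < ptrans f i ↔ i + 1 ≤ f m := by
  have hfin : {j : ℕ | i + 1 ≤ f j}.Finite := by
    apply Set.Finite.subset (Set.finite_Iio Nf)
    intro j hj
    simp only [Set.mem_setOf_eq] at hj
    simp only [Set.mem_Iio]
    by_contra h
    have := h0 j (by omega)
    omega
  have hdc : ∀ a b, a ≤ b → b ∈ {j : ℕ | i + 1 ≤ f j} → a ∈ {j : ℕ | i + 1 ≤ f j} :=
    fun a b hab hb => le_trans hb (hf hab)
  have hcard : ptrans f i = ({j : ℕ | i + 1 ≤ f j} : Set ℕ).ncard :=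
    Nat.card_coe_set_eq _
  rw [hcard]
  exact (ws_mem_iff_lt_ncard hfin hdc m).symm

lemma ws_pmult_ptrans {f : ℕ → ℕ} (hf : Antitone f) {Nf : ℕ} (h0 : ∀ j, Nf ≤ j → f j = 0)
    (k : ℕ) (hk : 0 < k) : pmult (ptrans f) k = f (k-1) - f k := by
  have hset : {i : ℕ | ptrans f i = k} = Set.Ico (f k) (f (k-1)) := by
    ext i
    simp only [Set.mem_setOf_eq, Set.mem_Ico]
    constructor
    · intro h
      constructor
      · by_contra hc
        have := (ws_lt_ptrans_iff hf h0 i k).mpr (by omega)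
        omega
      · have := (ws_lt_ptrans_iff hf h0 i (k-1)).mp (by omega)
        omega
    · rintro ⟨hl, hr⟩
      have ha := (ws_lt_ptrans_iff hf h0 i (k-1)).mpr (by omega)
      have hb : ¬ k < ptrans f i := by
        intro hc
        have := (ws_lt_ptrans_iff hf h0 i k).mp hc
        omega
      omega
  have : pmult (ptrans f) k = ({i : ℕ | ptrans f i = k} : Set ℕ).ncard :=
    Nat.card_coe_set_eq _
  rw [this, hset, ← Finset.coe_Ico, Set.ncard_coe_finset, Nat.card_Ico]

lemma ws_pair_parity {f : ℕ → ℕ} {d : ℕ} (hp : IsPartitionOf f d)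
    (hs : IsSymplectic (ptrans f)) : ∀ i, f (2*i) % 2 = f (2*i+1) % 2 := by
  intro i
  obtain ⟨hf, Nf, h0, -⟩ := hp
  have hm := hs (2*i+1) (by omega) ⟨i, by ring⟩
  rw [ws_pmult_ptrans hf h0 (2*i+1) (by omega)] at hm
  have hle : f (2*i+1) ≤ f (2*i) := hf (by omega)
  have he : (2*i+1) - 1 = 2*i := by omega
  rw [he] at hm
  rcases hm with ⟨c, hc⟩
  omega

def ws_ind (f g : ℕ → ℕ) : ℕ → ℤ := fun N =>
  if N % 2 = 1 then (if f (N-1) % 2 = 0 ∧ g (N-1) % 2 = 1 then 1 else 0)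
  else if N = 0 then 0
  else if f (N-1) = f N ∧ f N % 2 = 0 ∧ g (N-1) = g N ∧ g N % 2 = 1 then 1 else 0

lemma ws_ind_nonneg (f g : ℕ → ℕ) (N : ℕ) : 0 ≤ ws_ind f g N := by
  unfold ws_ind; split_ifs <;> norm_num

lemma ws_ind_le_one (f g : ℕ → ℕ) (N : ℕ) : ws_ind f g N ≤ 1 := by
  unfold ws_ind; split_ifs <;> norm_num

lemma ws_xi_step {f g : ℕ → ℕ} (hf : Antitone f) (hg : Antitone g)
    (hpf : ∀ i, f (2*i) % 2 = f (2*i+1) % 2) (hpg : ∀ i, g (2*i) % 2 = g (2*i+1) % 2)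
    {d : ℕ} (hd : d % 2 = 0) (j : ℕ) :
    xiSeq f g 0 1 d j = ws_ind f g (j+1) - ws_ind f g j := by
  have hfj : f (j+1) ≤ f j := hf (Nat.le_succ j)
  have hgj : g (j+1) ≤ g j := hg (Nat.le_succ j)
  have hfp : f j ≤ f (j-1) := hf (Nat.sub_le j 1)
  have hgp : g j ≤ g (j-1) := hg (Nat.sub_le j 1)
  rcases Nat.mod_two_eq_zero_or_one j with hj | hj
  · simp only [xiSeq, ws_ind, Nat.add_sub_cancel]
    split_ifs <;> omega
  · have e1 : 2*(j/2) = j - 1 := by omega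
    have e2 : 2*(j/2)+1 = j := by omega
    have hparf := hpf (j/2)
    have hparg := hpg (j/2)
    rw [e2, e1] at hparf hparg
    simp only [xiSeq, ws_ind, Nat.add_sub_cancel]
    split_ifs <;> first | omega | (exfalso; assumption)

lemma ws_xi_sum {f g : ℕ → ℕ} (hf : Antitone f) (hg : Antitone g)
    (hpf : ∀ i, f (2*i) % 2 = f (2*i+1) % 2) (hpg : ∀ i, g (2*i) % 2 = g (2*i+1) % 2)
    {d : ℕ} (hd : d % 2 = 0) (N : ℕ) :
    ∑ j ∈ Finset.range N, xiSeq f g 0 1 d j = ws_ind f g N := by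
  induction N with
  | zero => simp [ws_ind]
  | succ n ih =>
    rw [Finset.sum_range_succ, ih, ws_xi_step hf hg hpf hpg hd]
    ring

lemma ws_wald_sum {f g : ℕ → ℕ} (hf : Antitone f) (hg : Antitone g)
    (hpf : ∀ i, f (2*i) % 2 = f (2*i+1) % 2) (hpg : ∀ i, g (2*i) % 2 = g (2*i+1) % 2)
    {d : ℕ} (hd : d % 2 = 0) (N : ℕ) :
    ∑ j ∈ Finset.range N, wald f g 0 1 d j
      = ((∑ j ∈ Finset.range N, (f j + g j) : ℕ) : ℤ) + ws_ind f g N := by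
  unfold wald
  rw [Finset.sum_add_distrib, ws_xi_sum hf hg hpf hpg hd]
  congr 1
  push_cast
  rfl

lemma ws_even_prefix {f : ℕ → ℕ} (hpf : ∀ i, f (2*i) % 2 = f (2*i+1) % 2) (m : ℕ) :
    (∑ j ∈ Finset.range (2*m), f j) % 2 = 0 := by
  induction m with
  | zero => simp
  | succ n ih =>
    have h1 : 2*(n+1) = (2*n + 1) + 1 := by ring
    rw [h1, Finset.sum_range_succ, Finset.sum_range_succ]
    have := hpf n
    omega

lemma ws_odd_prefix_parity {f : ℕ → ℕ} (hpf : ∀ i, f (2*i) % 2 = f (2*i+1) % 2) (m : ℕ) :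
    (∑ j ∈ Finset.range (2*m+1), f j) % 2 = f (2*m) % 2 := by
  rw [Finset.sum_range_succ]
  have := ws_even_prefix hpf m
  omega

lemma ws_ind_le_ind {f g f' g' : ℕ → ℕ} (hf' : Antitone f') (hg' : Antitone g')
    (hpf : ∀ i, f (2*i) % 2 = f (2*i+1) % 2) (hpf' : ∀ i, f' (2*i) % 2 = f' (2*i+1) % 2)
    (hpg : ∀ i, g (2*i) % 2 = g (2*i+1) % 2) (hpg' : ∀ i, g' (2*i) % 2 = g' (2*i+1) % 2)
    (hle1 : NDomLE f f') (hle2 : NDomLE g g') (N : ℕ)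
    (hAa : ∑ j ∈ Finset.range N, f j = ∑ j ∈ Finset.range N, f' j)
    (hBb : ∑ j ∈ Finset.range N, g j = ∑ j ∈ Finset.range N, g' j) :
    ws_ind f g N ≤ ws_ind f' g' N := by
  rcases Nat.eq_zero_or_pos N with rfl | hpos
  · simp [ws_ind]
  rcases Nat.mod_two_eq_zero_or_one N with hN | hN
  · obtain ⟨m, rfl⟩ : ∃ m, N = m + 1 := ⟨N - 1, by omega⟩
    have hle_m := hle1 m
    have hle_m2 := hle1 (m+2)
    have hle_mg := hle2 m
    have hle_m2g := hle2 (m+2)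
    have s1 := Finset.sum_range_succ f m
    have s2 := Finset.sum_range_succ f' m
    have s3 := Finset.sum_range_succ g m
    have s4 := Finset.sum_range_succ g' m
    have s5 : ∑ j ∈ Finset.range (m+2), f j = ∑ j ∈ Finset.range (m+1), f j + f (m+1) :=
      Finset.sum_range_succ f (m+1)
    have s6 : ∑ j ∈ Finset.range (m+2), f' j = ∑ j ∈ Finset.range (m+1), f' j + f' (m+1) :=
      Finset.sum_range_succ f' (m+1)
    have s7 : ∑ j ∈ Finset.range (m+2), g j = ∑ j ∈ Finset.range (m+1), g j + g (m+1) :=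
      Finset.sum_range_succ g (m+1)
    have s8 : ∑ j ∈ Finset.range (m+2), g' j = ∑ j ∈ Finset.range (m+1), g' j + g' (m+1) :=
      Finset.sum_range_succ g' (m+1)
    have haf : f' (m+1) ≤ f' m := hf' (Nat.le_succ m)
    have hag : g' (m+1) ≤ g' m := hg' (Nat.le_succ m)
    have h1 : ¬ ((m+1) % 2 = 1) := by omega
    have h2 : ¬ (m+1 = 0) := by omega
    simp only [ws_ind, Nat.add_sub_cancel]
    rw [if_neg h1, if_neg h2, if_neg h1, if_neg h2]
    split_ifs with hP hP' hP'
    · exact le_refl _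
    · exfalso; omega
    · norm_num
    · exact le_refl _
  · have hm : N = 2*(N/2) + 1 := by omega
    have t1 := ws_odd_prefix_parity hpf (N/2)
    have t2 := ws_odd_prefix_parity hpf' (N/2)
    have t3 := ws_odd_prefix_parity hpg (N/2)
    have t4 := ws_odd_prefix_parity hpg' (N/2)
    rw [← hm] at t1 t2 t3 t4
    have e : 2*(N/2) = N - 1 := by omega
    rw [e] at t1 t2 t3 t4
    simp only [ws_ind]
    rw [if_pos hN, if_pos hN]
    split_ifs with hP hP' hP'
    · exact le_refl _
    · exfalso; omega
    · norm_num
    · exact le_refl _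

end WaldAux

/-- type C monotonicity.  `d₁, d₂` even, `d = d₁+d₂`; `λ₁ ≤ λ₁'` special
symplectic partitions of `d₁` and `λ₂ ≤ λ₂'` special orthogonal partitions of `d₂` imply
`W(λ₁,λ₂) ≤ W(λ₁',λ₂')` (ε₁=0, ε₂=1). -/
theorem stmt7 (d1 d2 : ℕ) (hd1 : Even d1) (hd2 : Even d2)
    (lam1 lam1' lam2 lam2' : ℕ → ℕ)
    (h1 : IsPartitionOf lam1 d1) (h1sp : IsSymplectic lam1)
    (h1s : IsSymplectic (ptrans lam1))
    (h1' : IsPartitionOf lam1' d1) (h1sp' : IsSymplectic lam1')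
    (h1s' : IsSymplectic (ptrans lam1'))
    (h2 : IsPartitionOf lam2 d2) (h2o : IsOrthogonal lam2)
    (h2s : IsSymplectic (ptrans lam2))
    (h2' : IsPartitionOf lam2' d2) (h2o' : IsOrthogonal lam2')
    (h2s' : IsSymplectic (ptrans lam2'))
    (hle1 : NDomLE lam1 lam1') (hle2 : NDomLE lam2 lam2') :
    DomLE (wald lam1 lam2 0 1 (d1+d2)) (wald lam1' lam2' 0 1 (d1+d2)) := by
  have pf1 := ws_pair_parity h1 h1s
  have pf1' := ws_pair_parity h1' h1s'
  have pf2 := ws_pair_parity h2 h2s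
  have pf2' := ws_pair_parity h2' h2s'
  have hd : (d1 + d2) % 2 = 0 := by
    rcases hd1 with ⟨a, ha⟩; rcases hd2 with ⟨b, hb⟩; omega
  intro N
  rw [ws_wald_sum h1.1 h2.1 pf1 pf2 hd N, ws_wald_sum h1'.1 h2'.1 pf1' pf2' hd N]
  have hA := hle1 N
  have hB := hle2 N
  have hsum : ∑ j ∈ Finset.range N, (lam1 j + lam2 j)
      = ∑ j ∈ Finset.range N, lam1 j + ∑ j ∈ Finset.range N, lam2 j :=
    Finset.sum_add_distrib
  have hsum' : ∑ j ∈ Finset.range N, (lam1' j + lam2' j)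
      = ∑ j ∈ Finset.range N, lam1' j + ∑ j ∈ Finset.range N, lam2' j :=
    Finset.sum_add_distrib
  by_cases heq : ∑ j ∈ Finset.range N, lam1 j + ∑ j ∈ Finset.range N, lam2 j
      = ∑ j ∈ Finset.range N, lam1' j + ∑ j ∈ Finset.range N, lam2' j
  · have hAe : ∑ j ∈ Finset.range N, lam1 j = ∑ j ∈ Finset.range N, lam1' j := by omega
    have hBe : ∑ j ∈ Finset.range N, lam2 j = ∑ j ∈ Finset.range N, lam2' j := by omega
    have hind := ws_ind_le_ind h1'.1 h2'.1 pf1 pf1' pf2 pf2' hle1 hle2 N hAe hBe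
    omega
  · have i1 := ws_ind_le_one lam1 lam2 N
    have i2 := ws_ind_nonneg lam1' lam2' N
    omega
end
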